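/- arXiv:2008.13260 — 3 statements merged into one kernel-verified Lean document; each statement's English description precedes it below -/
import Mathlib

section
/- Let f be a perfect k-coloring of the Hamming graph H(n,3) with quotient matrix S, let λ_0 > λ_1 > … > λ_l be the distinct eigenvalues of S, and let i be any color. Then there exists a unique tuple of real numbers (a_1,…,a_l) such that for every t = 0,1,…,l−1: Σ_{j=1}^{l} λ_j^t · a_j = |f^{-1}(i)| · (S^t)_{i,i} − (|f^{-1}(i)|² / 3^n) · λ_0^t (where (S^0)_{i,i} = 1); moreover, for every j = 1,…,l the number 3^n · a_j is a non-negative integer. -/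
/-- The Hamming graph `H(n,q)`: vertices are `Fin n → ZMod q`, two vertices are
adjacent iff their Hamming distance is `1`. -/
def hammingGraph (n q : ℕ) : SimpleGraph (Fin n → ZMod q) where
  Adj x y := hammingDist x y = 1
  symm := by constructor; intro x y h; rwa [hammingDist_comm]
  loopless := by constructor; intro x h; simp [hammingDist_self] at h

/-- The distance from a vertex `x` to a code `C` in a graph `G`. -/
noncomputable def distToCode {V : Type*} (G : SimpleGraph V) (C : Set V) (x : V) : ℕ :=
  sInf {d : ℕ | ∃ c ∈ C, G.dist x c = d}

/-- The code distance of a code `C` in a graph `G`: the minimum distance between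
two distinct codewords. -/
noncomputable def codeDist {V : Type*} (G : SimpleGraph V) (C : Set V) : ℕ :=
  sInf {d : ℕ | ∃ x ∈ C, ∃ y ∈ C, x ≠ y ∧ G.dist x y = d}

/-- A code `C` is `1`-perfect if every vertex is at distance at most `1`
from exactly one codeword. -/
def IsOnePerfect {V : Type*} (G : SimpleGraph V) (C : Set V) : Prop :=
  ∀ x, ∃! c, c ∈ C ∧ G.dist x c ≤ 1

/-- Deleting the `i`-th coordinate of a tuple. -/
def deleteCoord {α : Type*} {n : ℕ} (i : Fin n) (c : Fin n → α) (j : Fin (n - 1)) : α :=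
  c (Fin.cast (show n - 1 + 1 = n by have := i.pos; omega)
      ((Fin.cast (show n = n - 1 + 1 by have := i.pos; omega) i).succAbove j))

/-- The projection (puncturing) of a code in `H(n,q)` at coordinate `i`. -/
def hammingProj {n q : ℕ} (i : Fin n) (C : Set (Fin n → ZMod q)) :
    Set (Fin (n - 1) → ZMod q) :=
  (deleteCoord i) '' C

/-- A code `C` in `H(n,q)` is extended `1`-perfect if it is nonempty, its code distance
is `4`, and its projection at some coordinate is a `1`-perfect code in `H(n-1,q)`. -/
def IsExtOnePerfectH (n q : ℕ) (C : Set (Fin n → ZMod q)) : Prop :=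
  C.Nonempty ∧ codeDist (hammingGraph n q) C = 4 ∧
    ∃ i : Fin n, IsOnePerfect (hammingGraph (n - 1) q) (hammingProj i C)

/-- A perfect coloring of `G` in `k` colors with quotient matrix `S`: a surjective map
`f` onto the colors such that every vertex of color `i` has exactly `S i j` neighbours
of color `j`. -/
def IsPerfectColoring {V : Type*} (G : SimpleGraph V) {k : ℕ} (f : V → Fin k)
    (S : Matrix (Fin k) (Fin k) ℤ) : Prop :=
  Function.Surjective f ∧
    ∀ v j, (({u | G.Adj v u ∧ f u = j} : Set V).ncard : ℤ) = S (f v) j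

/-- A code `C` in `G` is completely regular with quotient matrix `S` if the distance
coloring `x ↦ d(x, C)` is a perfect coloring with quotient matrix `S`. -/
def IsCompletelyRegular {V : Type*} (G : SimpleGraph V) (C : Set V) {k : ℕ}
    (S : Matrix (Fin k) (Fin k) ℤ) : Prop :=
  ∃ h : ∀ x, distToCode G C x < k,
    IsPerfectColoring G (fun x => (⟨distToCode G C x, h x⟩ : Fin k)) S

/-- The connecting set of the Shrikhande graph as a Cayley graph on `ℤ₄ × ℤ₄`. -/
def shrikhandeSet : Set (ZMod 4 × ZMod 4) :=
  {(0, 1), (1, 0), (0, 3), (3, 0), (1, 1), (3, 3)}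

/-- The vertex set of the graph `D(m,n)`. -/
abbrev DoobV (m n : ℕ) := (Fin m → ZMod 4 × ZMod 4) × (Fin n → ZMod 4)

/-- The graph `D(m,n)`: the direct product of `m` copies of the Shrikhande graph and
`n` copies of `K₄`. Two vertices are adjacent iff they differ in exactly one
coordinate and, if it is a Shrikhande coordinate, the difference there lies in the
connecting set. For `m > 0` it is a Doob graph; `D(0,n) = H(n,4)`. -/
def doobGraph (m n : ℕ) : SimpleGraph (DoobV m n) :=
  SimpleGraph.fromRel (fun x y =>
    (∃ i, x.1 i - y.1 i ∈ shrikhandeSet ∧ (∀ j, j ≠ i → x.1 j = y.1 j) ∧ x.2 = y.2) ∨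
    (∃ i, x.2 i ≠ y.2 i ∧ (∀ j, j ≠ i → x.2 j = y.2 j) ∧ x.1 = y.1))

/-- The projection (puncturing) of a code in `D(m,n)` at the `K₄` coordinate `i`. -/
def doobProj {m n : ℕ} (i : Fin n) (C : Set (DoobV m n)) : Set (DoobV m (n - 1)) :=
  (fun x => (x.1, deleteCoord i x.2)) '' C

/-- A code `C` in `D(m,n)`, `n ≥ 1`, is extended `1`-perfect if it is nonempty, its code
distance is `4`, and its projection at some `K₄` coordinate is a `1`-perfect code in
`D(m,n-1)`. A code `C` in `D(m,0)` is extended `1`-perfect if it is nonempty, its code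
distance is `4`, and `2m = (4^l+2)/3` and `|C| = 4^(2m-l-1)` for some `l ≥ 1`. -/
def IsExtOnePerfectD (m n : ℕ) (C : Set (DoobV m n)) : Prop :=
  C.Nonempty ∧ codeDist (doobGraph m n) C = 4 ∧
    (if n = 0 then
        ∃ l : ℕ, 0 < l ∧ 3 * (2 * m) = 4 ^ l + 2 ∧ C.ncard = 4 ^ (2 * m - l - 1)
      else ∃ i : Fin n, IsOnePerfect (doobGraph m (n - 1)) (doobProj i C))


open Finset Matrix

namespace S3aux
variable {n : ℕ}

def fac (a b : ZMod 3) : ℤ := if a = b then 2 else -1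

lemma fac_comm (a b : ZMod 3) : fac a b = fac b a := by unfold fac; revert a b; decide
lemma fac_sum1 : ∀ a b : ZMod 3, (∑ c : ZMod 3, fac a c * fac c b) = 3 * fac a b := by decide
lemma fac_sum2 : ∀ a b : ZMod 3, (∑ c ∈ Finset.univ.erase a, fac c b) = - fac a b := by decide
lemma fac_add_one : ∀ a b : ZMod 3, fac a b + 1 = if a = b then 3 else 0 := by decide

def NT (n : ℕ) (T : Finset (Fin n)) : Matrix (Fin n → ZMod 3) (Fin n → ZMod 3) ℤ :=
  fun x y => ∏ i ∈ T, fac (x i) (y i)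

def Amat (n : ℕ) : Matrix (Fin n → ZMod 3) (Fin n → ZMod 3) ℤ :=
  fun x y => if hammingDist x y = 1 then 1 else 0

lemma NT_symm (T : Finset (Fin n)) (x y : Fin n → ZMod 3) : NT n T x y = NT n T y x := by
  unfold NT; exact Finset.prod_congr rfl fun i _ => fac_comm _ _

lemma nbhd_eq_image (x : Fin n → ZMod 3) :
    (Finset.univ.filter fun z => hammingDist x z = 1) =
      ((Finset.univ.filter fun p : Fin n × ZMod 3 => p.2 ≠ x p.1).image
        fun p => Function.update x p.1 p.2) := by
  ext z
  simp only [mem_filter, mem_image, mem_univ, true_and]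
  constructor
  · intro hz
    have hz' : (Finset.univ.filter fun i => x i ≠ z i).card = 1 := hz
    obtain ⟨i0, hi0⟩ := Finset.card_eq_one.mp hz'
    have hmem : ∀ i : Fin n, (x i ≠ z i) ↔ i = i0 := by
      intro i
      rw [show (i = i0) ↔ i ∈ ({i0} : Finset (Fin n)) by simp, ← hi0]
      simp
    refine ⟨⟨i0, z i0⟩, fun h => ((hmem i0).mpr rfl) h.symm, ?_⟩
    funext j
    by_cases hj : j = i0
    · subst hj; simp [Function.update]
    · have hxz : x j = z j := by
        by_contra hne; exact hj ((hmem j).mp hne)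
      simp [Function.update, hj, hxz]
  · rintro ⟨⟨i0, c⟩, hc, rfl⟩
    simp only at hc
    show (Finset.univ.filter fun i => x i ≠ Function.update x i0 c i).card = 1
    rw [Finset.card_eq_one]
    refine ⟨i0, ?_⟩
    ext i
    simp only [mem_filter, mem_univ, true_and, mem_singleton]
    by_cases hi : i = i0
    · subst hi; simp [Function.update, (Ne.symm hc)]
    · simp [Function.update, hi]

lemma update_injOn (x : Fin n → ZMod 3) :
    Set.InjOn (fun p : Fin n × ZMod 3 => Function.update x p.1 p.2)
      ((Finset.univ.filter fun p : Fin n × ZMod 3 => p.2 ≠ x p.1) : Finset _) := by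
  rintro ⟨i, c⟩ hi ⟨j, d⟩ hj h
  simp only [coe_filter, Set.mem_setOf_eq, mem_univ, true_and] at hi hj
  simp only at h
  by_cases hij : i = j
  · subst hij
    have := congrFun h i; simpa [Function.update] using this
  · exfalso
    have h1 := congrFun h i
    have h2 : Function.update x i c i = c := by simp [Function.update]
    have h3 : Function.update x j d i = x i := by simp [Function.update, hij]
    rw [h2, h3] at h1; exact hi h1

lemma sum_filter_prod {M : Type*} [AddCommMonoid M] (x : Fin n → ZMod 3)
    (G : Fin n × ZMod 3 → M) :
    ∑ p ∈ Finset.univ.filter (fun p : Fin n × ZMod 3 => p.2 ≠ x p.1), G p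
      = ∑ i0 : Fin n, ∑ c ∈ Finset.univ.erase (x i0), G (i0, c) := by
  rw [Finset.sum_filter, Fintype.sum_prod_type]
  refine Finset.sum_congr rfl fun i0 _ => ?_
  rw [← Finset.sum_filter]
  congr 1
  ext c; simp [Finset.mem_erase]

lemma sum_nbhd {M : Type*} [AddCommMonoid M] (x : Fin n → ZMod 3) (F : (Fin n → ZMod 3) → M) :
    ∑ z ∈ Finset.univ.filter (fun z => hammingDist x z = 1), F z =
      ∑ i0 : Fin n, ∑ c ∈ Finset.univ.erase (x i0), F (Function.update x i0 c) := by
  rw [nbhd_eq_image, Finset.sum_image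
    (fun p hp q hq h => update_injOn x (by simpa using hp) (by simpa using hq) h)]
  exact sum_filter_prod x (fun p => F (Function.update x p.1 p.2))

/-- sum of all projector matrices is `3^n • 1` -/
lemma sum_NT (x y : Fin n → ZMod 3) :
    ∑ T : Finset (Fin n), NT n T x y = if x = y then (3:ℤ)^n else 0 := by
  have h1 : ∑ T : Finset (Fin n), NT n T x y
      = ∑ T ∈ (Finset.univ : Finset (Fin n)).powerset, ∏ i ∈ T, fac (x i) (y i) := by
    rw [Finset.powerset_univ]; rfl
  have h2 : ∏ i : Fin n, (fac (x i) (y i) + 1)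
      = ∑ T ∈ (Finset.univ : Finset (Fin n)).powerset,
          (∏ i ∈ T, fac (x i) (y i)) * ∏ i ∈ Finset.univ \ T, (1:ℤ) := by
    exact Finset.prod_add _ _ _
  simp only [Finset.prod_const_one, mul_one] at h2
  rw [h1, ← h2]
  have h3 : ∏ i : Fin n, (fac (x i) (y i) + 1) = ∏ i : Fin n, (if x i = y i then (3:ℤ) else 0) := by
    exact Finset.prod_congr rfl fun i _ => fac_add_one _ _
  rw [h3]
  by_cases hxy : x = y
  · subst hxy; simp
  · have : ∃ i, x i ≠ y i := by
      by_contra h; push_neg at h; exact hxy (funext h)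
    obtain ⟨i, hi⟩ := this
    rw [if_neg hxy]
    exact Finset.prod_eq_zero (Finset.mem_univ i) (by simp [hi])

/-- idempotence (rescaled): `NT * NT = 3^n • NT` -/
lemma NT_mul_NT (T : Finset (Fin n)) : NT n T * NT n T = (3:ℤ)^n • NT n T := by
  ext x y
  show ∑ z, NT n T x z * NT n T z y = (3:ℤ)^n * NT n T x y
  have key : ∀ z : Fin n → ZMod 3, NT n T x z * NT n T z y
      = ∏ i : Fin n, (if i ∈ T then fac (x i) (z i) * fac (z i) (y i) else 1) := by
    intro z
    rw [Finset.prod_ite_mem, Finset.univ_inter]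
    unfold NT
    rw [← Finset.prod_mul_distrib]
  simp only [key]
  rw [show ∑ z : Fin n → ZMod 3, ∏ i : Fin n, (if i ∈ T then fac (x i) (z i) * fac (z i) (y i) else 1)
      = ∏ i : Fin n, ∑ c : ZMod 3, (if i ∈ T then fac (x i) c * fac c (y i) else 1) by
    rw [Finset.prod_univ_sum]
    rw [← Fintype.piFinset_univ]]
  have h4 : ∀ i : Fin n, (∑ c : ZMod 3, (if i ∈ T then fac (x i) c * fac c (y i) else 1))
      = 3 * (if i ∈ T then fac (x i) (y i) else 1) := by
    intro i
    by_cases hi : i ∈ T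
    · simp only [hi, if_true]; exact fac_sum1 _ _
    · simp [hi]
  simp only [h4]
  rw [Finset.prod_mul_distrib, Finset.prod_const, Finset.prod_ite_mem, Finset.univ_inter]
  simp [NT, Finset.card_univ]

/-- eigen-equation: `A * NT = (2n - 3|T|) • NT` -/
lemma Amat_mul_NT (T : Finset (Fin n)) :
    Amat n * NT n T = ((2*n : ℤ) - 3*T.card) • NT n T := by
  ext x y
  show ∑ z, Amat n x z * NT n T z y = ((2*n : ℤ) - 3*T.card) * NT n T x y
  have h1 : ∑ z, Amat n x z * NT n T z y
      = ∑ z ∈ Finset.univ.filter (fun z => hammingDist x z = 1), NT n T z y := by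
    rw [Finset.sum_filter]
    refine Finset.sum_congr rfl fun z _ => ?_
    unfold Amat
    by_cases h : hammingDist x z = 1 <;> simp [h]
  rw [h1, sum_nbhd x (fun z => NT n T z y)]
  have h2 : ∀ i0 : Fin n, i0 ∉ T → ∀ c, NT n T (Function.update x i0 c) y = NT n T x y := by
    intro i0 hi0 c
    unfold NT
    refine Finset.prod_congr rfl fun i hi => ?_
    have : i ≠ i0 := fun h => hi0 (h ▸ hi)
    simp [Function.update, this]
  have h3 : ∀ i0 ∈ T, ∑ c ∈ Finset.univ.erase (x i0), NT n T (Function.update x i0 c) y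
      = - NT n T x y := by
    intro i0 hi0
    have hsplit : ∀ c, NT n T (Function.update x i0 c) y
        = fac c (y i0) * ∏ i ∈ T.erase i0, fac (x i) (y i) := by
      intro c
      unfold NT
      rw [← Finset.mul_prod_erase T _ hi0]
      congr 1
      · simp [Function.update]
      · refine Finset.prod_congr rfl fun i hi => ?_
        have : i ≠ i0 := (Finset.mem_erase.mp hi).1
        simp [Function.update, this]
    simp only [hsplit]
    rw [← Finset.sum_mul, fac_sum2]
    rw [show NT n T x y = fac (x i0) (y i0) * ∏ i ∈ T.erase i0, fac (x i) (y i) from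
      (Finset.mul_prod_erase T _ hi0).symm]
    ring
  rw [← Finset.sum_filter_add_sum_filter_not Finset.univ (fun i0 => i0 ∈ T)]
  have e1 : ∑ i0 ∈ Finset.univ.filter (fun i0 => i0 ∈ T),
      ∑ c ∈ Finset.univ.erase (x i0), NT n T (Function.update x i0 c) y
      = - T.card * NT n T x y := by
    rw [Finset.sum_congr (Finset.filter_univ_mem T) (fun i0 hi0 => h3 i0 hi0),
      Finset.sum_const, nsmul_eq_mul]
    ring
  have e2 : ∑ i0 ∈ Finset.univ.filter (fun i0 => i0 ∉ T),
      ∑ c ∈ Finset.univ.erase (x i0), NT n T (Function.update x i0 c) y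
      = 2 * ((n : ℤ) - T.card) * NT n T x y := by
    have inner : ∀ i0 ∈ Finset.univ.filter (fun i0 => i0 ∉ T),
        ∑ c ∈ Finset.univ.erase (x i0), NT n T (Function.update x i0 c) y
          = 2 * NT n T x y := by
      intro i0 hi0
      have hi0' : i0 ∉ T := by simpa using hi0
      rw [Finset.sum_congr rfl (fun c _ => h2 i0 hi0' c), Finset.sum_const]
      rw [Finset.card_erase_of_mem (Finset.mem_univ _), nsmul_eq_mul]
      norm_num [ZMod.card]
    rw [Finset.sum_congr rfl inner, Finset.sum_const, nsmul_eq_mul]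
    have hcard : (Finset.univ.filter (fun i0 => i0 ∉ T)).card = n - T.card := by
      rw [Finset.filter_not, Finset.filter_univ_mem]
      rw [Finset.card_sdiff_of_subset (Finset.subset_univ T), Finset.card_univ, Fintype.card_fin]
    rw [hcard]
    have hle : T.card ≤ n := by
      have := Finset.card_le_card (Finset.subset_univ T)
      simpa [Finset.card_univ] using this
    push_cast [hle]
    ring
  rw [e1, e2]
  ring

lemma Amat_symm (x y : Fin n → ZMod 3) : Amat n x y = Amat n y x := by
  unfold Amat; rw [hammingDist_comm]

lemma NT_mul_Amat (T : Finset (Fin n)) :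
    NT n T * Amat n = ((2*n : ℤ) - 3*T.card) • NT n T := by
  have hA : (Amat n)ᵀ = Amat n := by ext x y; exact Amat_symm y x
  have hN : (NT n T)ᵀ = NT n T := by ext x y; exact NT_symm T y x
  calc NT n T * Amat n = ((Amat n)ᵀ * (NT n T)ᵀ)ᵀ := by
        rw [← Matrix.transpose_mul, Matrix.transpose_transpose]
      _ = ((Amat n) * (NT n T))ᵀ := by rw [hA, hN]
      _ = (((2*n : ℤ) - 3*T.card) • NT n T)ᵀ := by rw [Amat_mul_NT]
      _ = ((2*n : ℤ) - 3*T.card) • NT n T := by rw [Matrix.transpose_smul, hN]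

section coloring
variable {k : ℕ} (f : (Fin n → ZMod 3) → Fin k) (S : Matrix (Fin k) (Fin k) ℤ)

/-- indicator vector of a color class -/
def chi (m : Fin k) : (Fin n → ZMod 3) → ℤ := fun v => if f v = m then 1 else 0

variable {f S} (hf : IsPerfectColoring (hammingGraph n 3) f S)
include hf

lemma S_entry (v : Fin n → ZMod 3) (j : Fin k) :
    S (f v) j = ((Finset.univ.filter fun u => hammingDist v u = 1 ∧ f u = j).card : ℤ) := by
  rw [← hf.2 v j]
  congr 1
  rw [show {u | (hammingGraph n 3).Adj v u ∧ f u = j}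
      = ((Finset.univ.filter fun u => hammingDist v u = 1 ∧ f u = j) : Finset _) by
    ext u; simp [hammingGraph]]
  rw [Set.ncard_coe_finset]

lemma Amat_mulVec_chi (m : Fin k) :
    (Amat n).mulVec (chi f m) = fun x => S (f x) m := by
  funext x
  show ∑ y, Amat n x y * chi f m y = S (f x) m
  rw [S_entry hf x m]
  unfold Amat chi
  rw [Finset.sum_congr rfl (fun y _ => by
    rw [ite_mul, one_mul, zero_mul, ← ite_and] :
    ∀ y ∈ Finset.univ, _ = if hammingDist x y = 1 ∧ f y = m then (1:ℤ) else 0)]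
  rw [Finset.sum_boole]

lemma Amat_pow_mulVec_chi (t : ℕ) (m : Fin k) :
    ((Amat n)^t).mulVec (chi f m) = fun x => (S^t) (f x) m := by
  induction t generalizing m with
  | zero =>
    funext x
    simp [Matrix.one_mulVec, chi, Matrix.one_apply]
  | succ t ih =>
    have step : ((Amat n)^(t+1)).mulVec (chi f m)
        = ((Amat n)^t).mulVec ((Amat n).mulVec (chi f m)) := by
      rw [pow_succ, ← Matrix.mulVec_mulVec]
    have h0 : (Amat n).mulVec (chi f m) = fun v => ∑ j : Fin k, S j m * chi f j v := by
      rw [Amat_mulVec_chi hf m]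
      funext v
      simp only [chi, mul_ite, mul_one, mul_zero]
      rw [Finset.sum_ite_eq Finset.univ (f v) (fun j => S j m)]
      simp
    rw [step, h0]
    funext x
    show ∑ y, ((Amat n)^t) x y * (∑ j : Fin k, S j m * chi f j y) = (S^(t+1)) (f x) m
    calc ∑ y, ((Amat n)^t) x y * (∑ j : Fin k, S j m * chi f j y)
        = ∑ y, ∑ j : Fin k, S j m * (((Amat n)^t) x y * chi f j y) := by
          refine Finset.sum_congr rfl fun y _ => ?_
          rw [Finset.mul_sum]
          exact Finset.sum_congr rfl fun j _ => by ring
      _ = ∑ j : Fin k, S j m * (∑ y, ((Amat n)^t) x y * chi f j y) := by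
          rw [Finset.sum_comm]
          exact Finset.sum_congr rfl fun j _ => by rw [Finset.mul_sum]
      _ = ∑ j : Fin k, S j m * (S^t) (f x) j := by
          refine Finset.sum_congr rfl fun j _ => ?_
          congr 1
          exact congrFun (ih j) x
      _ = (S^(t+1)) (f x) m := by
          rw [pow_succ, Matrix.mul_apply]
          exact Finset.sum_congr rfl fun j _ => by ring

lemma chi_dot_pow (t : ℕ) (i : Fin k) :
    chi f i ⬝ᵥ ((Amat n)^t).mulVec (chi f i)
      = ((Finset.univ.filter fun v => f v = i).card : ℤ) * (S^t) i i := by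
  rw [Amat_pow_mulVec_chi hf t i]
  unfold chi
  show (∑ x, (if f x = i then (1:ℤ) else 0) * (S^t) (f x) i) = _
  rw [Finset.sum_congr rfl (fun x _ => by
    rw [ite_mul, one_mul, zero_mul] :
    ∀ x ∈ Finset.univ, _ = if f x = i then (S^t) (f x) i else 0)]
  rw [Finset.sum_ite, Finset.sum_const_zero, add_zero]
  rw [Finset.sum_congr rfl (fun x hx => by
      rw [(Finset.mem_filter.mp hx).2] :
    ∀ x ∈ Finset.univ.filter (fun x => f x = i), (S^t) (f x) i = (S^t) i i)]
  rw [Finset.sum_const, nsmul_eq_mul]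

/-- row sums of `S` are `2n` -/
lemma S_row_sum (i : Fin k) : ∑ j, S i j = 2*n := by
  obtain ⟨v, rfl⟩ := hf.1 i
  rw [Finset.sum_congr rfl (fun j _ => S_entry hf v j)]
  rw [← Nat.cast_sum]
  have h1 : (Finset.univ.filter fun u => hammingDist v u = 1).card
      = ∑ j, ((Finset.univ.filter fun u => hammingDist v u = 1).filter (fun u => f u = j)).card :=
    Finset.card_eq_sum_card_fiberwise (fun u _ => Finset.mem_univ (f u))
  simp only [Finset.filter_filter] at h1
  rw [← h1]
  have h2 : (Finset.univ.filter fun u => hammingDist v u = 1).card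
      = ∑ u ∈ Finset.univ.filter (fun u => hammingDist v u = 1), 1 := by simp
  rw [h2, sum_nbhd v (fun _ => 1)]
  simp [Finset.card_erase_of_mem, ZMod.card]
  ring

lemma S_nonneg (i : Fin k) (j : Fin k) : 0 ≤ S i j := by
  obtain ⟨v, rfl⟩ := hf.1 i
  rw [S_entry hf v j]
  positivity

end coloring

lemma sum_mulVec' {V ι : Type*} [Fintype V] [Fintype ι] [DecidableEq V]
    (s : Finset ι) (M : ι → Matrix V V ℤ) (v : V → ℤ) :
    (∑ i ∈ s, M i) *ᵥ v = ∑ i ∈ s, (M i *ᵥ v) := by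
  funext x
  simp only [Matrix.mulVec, dotProduct, Matrix.sum_apply, Finset.sum_apply, Finset.sum_mul]
  rw [Finset.sum_comm]

lemma dotProduct_sum' {V ι : Type*} [Fintype V] [Fintype ι]
    (s : Finset ι) (v : V → ℤ) (w : ι → V → ℤ) :
    v ⬝ᵥ (∑ i ∈ s, w i) = ∑ i ∈ s, v ⬝ᵥ w i := by
  simp only [dotProduct, Finset.sum_apply, Finset.mul_sum]
  rw [Finset.sum_comm]

lemma Amat_pow_mul_NT (t : ℕ) (T : Finset (Fin n)) :
    (Amat n)^t * NT n T = (((2*n : ℤ) - 3*T.card)^t) • NT n T := by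
  induction t with
  | zero => simp
  | succ t ih =>
    rw [pow_succ, Matrix.mul_assoc, Amat_mul_NT, Matrix.mul_smul, ih, smul_smul]
    rw [pow_succ]
    congr 1
    ring

lemma sum_NT_eq : ∑ T : Finset (Fin n), NT n T = ((3:ℤ)^n) • (1 : Matrix _ _ ℤ) := by
  ext x y
  rw [Matrix.sum_apply]
  rw [sum_NT]
  simp [Matrix.one_apply]

section coloring2
variable {k : ℕ} {f : (Fin n → ZMod 3) → Fin k} {S : Matrix (Fin k) (Fin k) ℤ}

/-- the key quadratic form values -/
def mT (f : (Fin n → ZMod 3) → Fin k) (i : Fin k) (T : Finset (Fin n)) : ℤ :=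
  chi f i ⬝ᵥ (NT n T).mulVec (chi f i)

lemma mT_nonneg (i : Fin k) (T : Finset (Fin n)) : 0 ≤ mT f i T := by
  have hN : (NT n T)ᵀ = NT n T := by ext x y; exact NT_symm T y x
  have key : (3:ℤ)^n * mT f i T
      = ((NT n T).mulVec (chi f i)) ⬝ᵥ ((NT n T).mulVec (chi f i)) := by
    have h1 : (3:ℤ)^n * mT f i T
        = chi f i ⬝ᵥ ((NT n T * NT n T).mulVec (chi f i)) := by
      rw [NT_mul_NT, Matrix.smul_mulVec, dotProduct_smul]
      simp [mT]
    rw [h1, ← Matrix.mulVec_mulVec, Matrix.dotProduct_mulVec]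
    congr 1
    conv_lhs => rw [← hN]
    rw [Matrix.vecMul_transpose]
  have h2 : (0:ℤ) ≤ (3:ℤ)^n * mT f i T := by
    rw [key]
    exact Finset.sum_nonneg fun x _ => mul_self_nonneg _
  by_contra hc
  push_neg at hc
  have h3 : (0:ℤ) < 3^n := by positivity
  nlinarith

lemma mT_empty (i : Fin k) :
    mT f i (∅ : Finset (Fin n)) = ((Finset.univ.filter fun v => f v = i).card : ℤ)^2 := by
  unfold mT NT
  simp only [Finset.prod_empty]
  show ∑ x, chi f i x * (∑ y, (1:ℤ) * chi f i y) = _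
  have hsum : ∑ y, chi f i y = ((Finset.univ.filter fun v => f v = i).card : ℤ) := by
    unfold chi
    rw [Finset.sum_boole]
  rw [Finset.sum_congr rfl (fun x _ => by rw [show (∑ y, (1:ℤ) * chi f i y) = ∑ y, chi f i y
      from Finset.sum_congr rfl fun y _ => one_mul _, hsum])]
  rw [← Finset.sum_mul, hsum, sq]

variable (hf : IsPerfectColoring (hammingGraph n 3) f S)
include hf

/-- the master identity -/
lemma master (t : ℕ) (i : Fin k) :
    ∑ T : Finset (Fin n), ((2*n : ℤ) - 3*T.card)^t * mT f i T
      = 3^n * (((Finset.univ.filter fun v => f v = i).card : ℤ) * (S^t) i i) := by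
  have h1 : ∀ T : Finset (Fin n), ((2*n : ℤ) - 3*T.card)^t * mT f i T
      = chi f i ⬝ᵥ (((Amat n)^t * NT n T).mulVec (chi f i)) := by
    intro T
    rw [Amat_pow_mul_NT, Matrix.smul_mulVec, dotProduct_smul]
    simp [mT]
  rw [Finset.sum_congr rfl (fun T _ => h1 T)]
  have h2 : ∑ T : Finset (Fin n), chi f i ⬝ᵥ (((Amat n)^t * NT n T).mulVec (chi f i))
      = chi f i ⬝ᵥ (((Amat n)^t * ((3:ℤ)^n • (1 : Matrix _ _ ℤ))).mulVec (chi f i)) := by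
    rw [← sum_NT_eq, Matrix.mul_sum, sum_mulVec', dotProduct_sum']
  rw [h2]
  have h3 : (Amat n)^t * ((3:ℤ)^n • (1 : Matrix _ _ ℤ)) = (3:ℤ)^n • (Amat n)^t := by
    rw [Matrix.mul_smul, Matrix.mul_one]
  rw [h3, Matrix.smul_mulVec, dotProduct_smul, smul_eq_mul]
  rw [chi_dot_pow hf t i]

end coloring2

/-- eigenvalue criterion via determinant -/
lemma eig_iff_det {k : ℕ} (M : Matrix (Fin k) (Fin k) ℝ) (x : ℝ) :
    (∃ v : Fin k → ℝ, v ≠ 0 ∧ M.mulVec v = x • v) ↔ (M - x • 1).det = 0 := by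
  rw [← Matrix.exists_mulVec_eq_zero_iff]
  constructor
  · rintro ⟨v, hv, hMv⟩
    exact ⟨v, hv, by rw [Matrix.sub_mulVec, Matrix.smul_mulVec, Matrix.one_mulVec, hMv, sub_self]⟩
  · rintro ⟨v, hv, hMv⟩
    refine ⟨v, hv, ?_⟩
    rw [Matrix.sub_mulVec, Matrix.smul_mulVec, Matrix.one_mulVec, sub_eq_zero] at hMv
    exact hMv

lemma eig_transpose {k : ℕ} (M : Matrix (Fin k) (Fin k) ℝ) (x : ℝ)
    (h : ∃ v : Fin k → ℝ, v ≠ 0 ∧ Mᵀ.mulVec v = x • v) :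
    ∃ v : Fin k → ℝ, v ≠ 0 ∧ M.mulVec v = x • v := by
  rw [eig_iff_det] at h ⊢
  rw [show M - x • 1 = (Mᵀ - x • 1)ᵀ by
    rw [Matrix.transpose_sub, Matrix.transpose_transpose, Matrix.transpose_smul, Matrix.transpose_one]]
  rw [Matrix.det_transpose]
  exact h

lemma mulVec_sum_vec {V ι : Type*} [Fintype V] [Fintype ι] [DecidableEq V]
    (s : Finset ι) (M : Matrix V V ℤ) (w : ι → V → ℤ) :
    M *ᵥ (∑ i ∈ s, w i) = ∑ i ∈ s, M *ᵥ w i := by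
  funext x
  simp only [Matrix.mulVec, dotProduct, Finset.sum_apply, Finset.mul_sum]
  rw [Finset.sum_comm]

section vanishing
variable {k : ℕ} {f : (Fin n → ZMod 3) → Fin k} {S : Matrix (Fin k) (Fin k) ℤ}
variable (hf : IsPerfectColoring (hammingGraph n 3) f S)
include hf

/-- if `2n - 3|T|` is not an eigenvalue of `S`, then `m_T = 0` -/
lemma mT_vanish (i : Fin k) (T : Finset (Fin n))
    (hno : ¬ ∃ v : Fin k → ℝ, v ≠ 0 ∧
      (S.map ((↑) : ℤ → ℝ)).mulVec v = (((2*n : ℤ) - 3*T.card : ℤ) : ℝ) • v) :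
    mT f i T = 0 := by
  set θ : ℤ := (2*n : ℤ) - 3*T.card with hθ
  set y : Fin k → (Fin n → ZMod 3) → ℤ := fun m => (NT n T).mulVec (chi f m) with hy
  have heq : ∀ m : Fin k, ∑ j : Fin k, S j m • y j = θ • y m := by
    intro m
    have h0 : (Amat n).mulVec (chi f m) = ∑ j : Fin k, S j m • chi f j := by
      rw [Amat_mulVec_chi hf m]
      funext v
      simp only [Finset.sum_apply, Pi.smul_apply, chi, smul_eq_mul, mul_ite, mul_one, mul_zero]
      rw [Finset.sum_ite_eq Finset.univ (f v) (fun j => S j m)]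
      simp
    have h1 : (NT n T).mulVec ((Amat n).mulVec (chi f m))
        = (NT n T * Amat n).mulVec (chi f m) := Matrix.mulVec_mulVec _ _ _
    rw [h0, mulVec_sum_vec] at h1
    rw [NT_mul_Amat, Matrix.smul_mulVec] at h1
    rw [Finset.sum_congr rfl (fun j _ => (Matrix.mulVec_smul _ _ _ : _ = S j m • _))] at h1
    exact h1
  -- now pass to ℝ and use the eigenvalue hypothesis
  have hzero : ∀ x : Fin n → ZMod 3, ∀ m : Fin k, y m x = 0 := by
    intro x m
    by_contra hne
    apply hno
    apply eig_transpose
    refine ⟨fun m => ((y m x : ℤ) : ℝ), ?_, ?_⟩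
    · intro h0
      have h1 : ((y m x : ℤ) : ℝ) = 0 := congrFun h0 m
      exact hne (by exact_mod_cast h1)
    · funext m'
      have := congrFun (heq m') x
      simp only [Finset.sum_apply, Pi.smul_apply, smul_eq_mul] at this
      show ∑ j, (S.map ((↑) : ℤ → ℝ))ᵀ m' j * ((y j x : ℤ) : ℝ) = _
      have : ((∑ j : Fin k, S j m' * y j x : ℤ) : ℝ) = ((θ * y m' x : ℤ) : ℝ) := by
        exact_mod_cast congrArg (Int.cast : ℤ → ℝ) this
      push_cast at this
      simp only [Matrix.transpose_apply, Matrix.map_apply]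
      rw [this]
      simp
  unfold mT
  rw [show (NT n T).mulVec (chi f i) = y i from rfl]
  rw [show y i = 0 from funext fun x => hzero x i]
  simp

/-- every real eigenvalue of `S` is at most `2n` -/
lemma eig_le (x : ℝ)
    (hx : ∃ v : Fin k → ℝ, v ≠ 0 ∧ (S.map ((↑) : ℤ → ℝ)).mulVec v = x • v) :
    x ≤ 2*n := by
  obtain ⟨v, hv, hMv⟩ := hx
  have hk : Nonempty (Fin k) := ⟨f (fun _ => 0)⟩
  obtain ⟨i0, -, hmax⟩ := Finset.exists_max_image Finset.univ (fun i => |v i|)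
    (Finset.univ_nonempty)
  have hvi0 : 0 < |v i0| := by
    obtain ⟨j0, hj0⟩ := Function.ne_iff.mp hv
    exact lt_of_lt_of_le (abs_pos.mpr hj0) (hmax j0 (Finset.mem_univ _))
  have hrow : ∑ j, ((S i0 j : ℤ) : ℝ) = 2*n := by
    have := S_row_sum hf i0
    exact_mod_cast congrArg (Int.cast : ℤ → ℝ) this
  have hbound : |x| * |v i0| ≤ (2*n) * |v i0| := by
    have h1 : |x * v i0| = |x| * |v i0| := abs_mul _ _
    have h2 : x * v i0 = ∑ j, ((S i0 j : ℤ) : ℝ) * v j := by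
      have := congrFun hMv i0
      simp only [Pi.smul_apply, smul_eq_mul] at this
      rw [← this]
      rfl
    calc |x| * |v i0| = |∑ j, ((S i0 j : ℤ) : ℝ) * v j| := by rw [← h1, h2]
      _ ≤ ∑ j, |((S i0 j : ℤ) : ℝ) * v j| := Finset.abs_sum_le_sum_abs _ _
      _ ≤ ∑ j, ((S i0 j : ℤ) : ℝ) * |v i0| := by
          refine Finset.sum_le_sum fun j _ => ?_
          rw [abs_mul]
          have hSj : (0:ℝ) ≤ ((S i0 j : ℤ) : ℝ) := by
            exact_mod_cast S_nonneg hf i0 j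
          rw [abs_of_nonneg hSj]
          exact mul_le_mul_of_nonneg_left (hmax j (Finset.mem_univ _)) hSj
      _ = (2*n) * |v i0| := by rw [← Finset.sum_mul, hrow]
  have : |x| ≤ 2*n := le_of_mul_le_mul_right hbound hvi0
  exact le_trans (le_abs_self x) this

/-- `2n` is an eigenvalue of `S` (all-ones eigenvector) -/
lemma eig_top :
    ∃ v : Fin k → ℝ, v ≠ 0 ∧ (S.map ((↑) : ℤ → ℝ)).mulVec v = ((2*n : ℝ)) • v := by
  have hk : Nonempty (Fin k) := ⟨f (fun _ => 0)⟩
  refine ⟨fun _ => 1, ?_, ?_⟩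
  · intro h
    have := congrFun h (Classical.arbitrary (Fin k))
    simp at this
  · funext i
    show ∑ j, ((S i j : ℤ) : ℝ) * 1 = (2*n) * 1
    simp only [mul_one]
    have := S_row_sum hf i
    exact_mod_cast congrArg (Int.cast : ℤ → ℝ) this

end vanishing
end S3aux

/-- Theorem 1 for `H(n,3)` (Statement 3): for a perfect coloring `f` of `H(n,3)` with
quotient matrix `S` whose distinct eigenvalues are `L 0 > L 1 > … > L l`, and any color
`i`, the Vandermonde system has a unique solution `(a 0, …, a (l-1))` (indexed so that
`a j` corresponds to the eigenvalue `L (j+1)`), and `3^n * a j` is a non-negative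
integer for every `j`. -/
theorem statement3 (n : ℕ) {k l : ℕ} (f : (Fin n → ZMod 3) → Fin k)
    (S : Matrix (Fin k) (Fin k) ℤ)
    (hf : IsPerfectColoring (hammingGraph n 3) f S)
    (L : Fin (l + 1) → ℝ) (hmono : StrictAnti L)
    (heig : ∀ x : ℝ,
      (∃ v : Fin k → ℝ, v ≠ 0 ∧ (S.map ((↑) : ℤ → ℝ)).mulVec v = x • v) ↔ ∃ j, L j = x)
    (i : Fin k) :
    ∃ a : Fin l → ℝ,
      (∀ t : ℕ, t < l →
        ∑ j : Fin l, (L j.succ) ^ t * a j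
          = ((f ⁻¹' {i}).ncard : ℝ) * (((S ^ t) i i : ℤ) : ℝ)
            - (((f ⁻¹' {i}).ncard : ℝ) ^ 2 / 3 ^ n) * (L 0) ^ t) ∧
      (∀ b : Fin l → ℝ,
        (∀ t : ℕ, t < l →
          ∑ j : Fin l, (L j.succ) ^ t * b j
            = ((f ⁻¹' {i}).ncard : ℝ) * (((S ^ t) i i : ℤ) : ℝ)
              - (((f ⁻¹' {i}).ncard : ℝ) ^ 2 / 3 ^ n) * (L 0) ^ t) → b = a) ∧
      (∀ j : Fin l, ∃ r : ℕ, (3 ^ n : ℝ) * a j = r) := by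
  classical
  set c : ℤ := ((Finset.univ.filter fun v => f v = i).card : ℤ) with hc
  have hpre : ((f ⁻¹' {i}).ncard : ℝ) = (c : ℝ) := by
    rw [show f ⁻¹' {i} = ((Finset.univ.filter fun v => f v = i) : Finset (Fin n → ZMod 3)) by
      ext v; simp]
    rw [Set.ncard_coe_finset]
    simp [hc]
  have hL0 : L 0 = 2*n := by
    obtain ⟨j0, hj0⟩ := (heig (2*n)).mp (S3aux.eig_top hf)
    have h1 : L 0 ≤ 2*n := S3aux.eig_le hf (L 0) ((heig (L 0)).mpr ⟨0, rfl⟩)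
    have h2 : (2*n : ℝ) ≤ L 0 := by
      rw [← hj0]
      exact hmono.antitone (Fin.zero_le j0)
    linarith
  set θR : Finset (Fin n) → ℝ := fun T => (((2*n : ℤ) - 3*T.card : ℤ) : ℝ) with hθR
  set P : Fin l → Finset (Finset (Fin n)) :=
    fun j => Finset.univ.filter (fun T => θR T = L j.succ) with hP
  set a : Fin l → ℝ := fun j => (∑ T ∈ P j, (S3aux.mT f i T : ℝ)) / 3^n with ha
  have h3n : ((3:ℝ)^n) ≠ 0 := by positivity
  have hLlt : ∀ j : Fin l, L j.succ < L 0 := fun j => hmono (Fin.succ_pos j)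
  have keyval : ∀ t : ℕ,
      ∑ j : Fin l, (L j.succ) ^ t * a j
        = (c : ℝ) * (((S ^ t) i i : ℤ) : ℝ) - ((c:ℝ) ^ 2 / 3 ^ n) * (L 0) ^ t := by
    intro t
    set F : Finset (Fin n) → ℝ := fun T => θR T ^ t * (S3aux.mT f i T : ℝ) with hF
    have hmaster : ∑ T : Finset (Fin n), F T
        = 3^n * ((c:ℝ) * (((S ^ t) i i : ℤ) : ℝ)) := by
      have h0 := S3aux.master hf t i
      calc ∑ T : Finset (Fin n), F T
          = ((∑ T : Finset (Fin n), ((2*(n:ℤ)) - 3*T.card)^t * S3aux.mT f i T : ℤ) : ℝ) := by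
            simp only [hF, hθR]
            push_cast
            rfl
        _ = ((3^n * (c * (S^t) i i) : ℤ) : ℝ) := by rw [h0]
        _ = 3^n * ((c:ℝ) * (((S ^ t) i i : ℤ) : ℝ)) := by push_cast; ring
    have hsplit := Finset.sum_filter_add_sum_filter_not Finset.univ
      (fun T => ∃ j : Fin l, θR T = L j.succ) F
    have hfiber : ∑ T ∈ Finset.univ.filter (fun T => ∃ j : Fin l, θR T = L j.succ), F T
        = ∑ j : Fin l, ∑ T ∈ P j, F T := by
      have hBeq : Finset.univ.filter (fun T => ∃ j : Fin l, θR T = L j.succ)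
          = Finset.univ.biUnion (fun j : Fin l => P j) := by
        ext T
        simp [hP]
      rw [hBeq]
      refine Finset.sum_biUnion ?_
      intro j1 _ j2 _ hne
      simp only [Function.onFun, Finset.disjoint_left]
      intro T hT1 hT2
      simp only [hP, Finset.mem_filter] at hT1 hT2
      apply hne
      have : L j1.succ = L j2.succ := by rw [← hT1.2, ← hT2.2]
      exact Fin.succ_injective l (hmono.injective this)
    have hrest : ∑ T ∈ Finset.univ.filter (fun T => ¬ ∃ j : Fin l, θR T = L j.succ), F T
        = (L 0)^t * (c:ℝ)^2 := by
      have hemp : θR ∅ = (2*n : ℝ) := by simp [hθR]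
      have hmem : (∅ : Finset (Fin n)) ∈ Finset.univ.filter
          (fun T => ¬ ∃ j : Fin l, θR T = L j.succ) := by
        simp only [Finset.mem_filter, Finset.mem_univ, true_and]
        rintro ⟨j, hj⟩
        rw [hemp, ← hL0] at hj
        exact absurd hj.symm (ne_of_lt (hLlt j))
      rw [Finset.sum_eq_single_of_mem ∅ hmem ?_]
      · rw [hF]
        simp only [hemp, S3aux.mT_empty, ← hL0]
        push_cast [hc]
        ring
      · intro T hT hTne
        simp only [Finset.mem_filter, Finset.mem_univ, true_and] at hT
        have hvan : S3aux.mT f i T = 0 := by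
          apply S3aux.mT_vanish hf
          intro hex
          obtain ⟨j, hj⟩ := (heig _).mp hex
          rcases Fin.eq_zero_or_eq_succ j with hj0 | ⟨j', rfl⟩
          · rw [hj0, hL0] at hj
            have hcard : T.card = 0 := by
              have h6 : (2*(n:ℤ)) = (2*(n:ℤ) - 3*T.card) := by exact_mod_cast hj
              omega
            exact hTne (Finset.card_eq_zero.mp hcard)
          · exact hT ⟨j', hj.symm⟩
        rw [hF]
        simp [hvan]
    have hstep : ∀ j : Fin l, (L j.succ)^t * a j = (∑ T ∈ P j, F T) / 3^n := by
      intro j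
      rw [ha, ← mul_div_assoc]
      congr 1
      rw [Finset.mul_sum]
      refine Finset.sum_congr rfl fun T hT => ?_
      have hth : θR T = L j.succ := (Finset.mem_filter.mp hT).2
      simp only [hF]
      rw [hth]
    calc ∑ j : Fin l, (L j.succ) ^ t * a j
        = ∑ j : Fin l, (∑ T ∈ P j, F T) / 3^n := Finset.sum_congr rfl fun j _ => hstep j
      _ = (∑ j : Fin l, ∑ T ∈ P j, F T) / 3^n := by rw [Finset.sum_div]
      _ = (∑ T ∈ Finset.univ.filter (fun T => ∃ j : Fin l, θR T = L j.succ), F T) / 3^n := by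
          rw [hfiber]
      _ = ((∑ T : Finset (Fin n), F T)
            - ∑ T ∈ Finset.univ.filter (fun T => ¬ ∃ j : Fin l, θR T = L j.succ), F T) / 3^n := by
          rw [eq_sub_of_add_eq hsplit]
      _ = (3^n * ((c:ℝ) * (((S ^ t) i i : ℤ) : ℝ)) - (L 0)^t * (c:ℝ)^2) / 3^n := by
          rw [hmaster, hrest]
      _ = (c : ℝ) * (((S ^ t) i i : ℤ) : ℝ) - ((c:ℝ) ^ 2 / 3 ^ n) * (L 0) ^ t := by
          field_simp
  refine ⟨a, ?_, ?_, ?_⟩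
  · intro t _
    rw [hpre, keyval t]
  · intro b hb
    set x : Fin l → ℝ := fun j => L j.succ with hx
    have hxanti : StrictAnti x := fun p q h => hmono (Fin.succ_lt_succ_iff.mpr h)
    have hd : ∀ t : Fin l, ∑ j : Fin l, x j ^ (t : ℕ) * (b j - a j) = 0 := by
      intro t
      have h1 := hb (t : ℕ) t.isLt
      rw [hpre] at h1
      have h2 := keyval (t : ℕ)
      have h3 : ∑ j : Fin l, x j ^ (t:ℕ) * (b j - a j)
          = (∑ j : Fin l, x j ^ (t:ℕ) * b j) - ∑ j : Fin l, x j ^ (t:ℕ) * a j := by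
        rw [← Finset.sum_sub_distrib]
        exact Finset.sum_congr rfl fun j _ => by ring
      rw [h3, hx]
      simp only
      rw [h1, h2]
      ring
    set M : Matrix (Fin l) (Fin l) ℝ := fun t j => x j ^ (t : ℕ) with hM
    have hdet : M.det ≠ 0 := by
      have hMT : M = (Matrix.vandermonde x)ᵀ := by
        ext t j
        simp [hM, Matrix.vandermonde]
      rw [hMT, Matrix.det_transpose, Matrix.det_vandermonde]
      refine Finset.prod_ne_zero_iff.mpr fun p _ => Finset.prod_ne_zero_iff.mpr fun q hq => ?_
      have hpq : p < q := Finset.mem_Ioi.mp hq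
      exact sub_ne_zero.mpr (ne_of_lt (hxanti hpq))
    by_contra hne
    have hba : b - a ≠ 0 := sub_ne_zero.mpr hne
    have hMv : M.mulVec (b - a) = 0 := by
      funext t
      show ∑ j, M t j * (b - a) j = 0
      rw [← hd t]
      exact Finset.sum_congr rfl fun j _ => by simp [hM]
    exact hdet ((Matrix.exists_mulVec_eq_zero_iff).mp ⟨b - a, hba, hMv⟩)
  · intro j
    set r : ℤ := ∑ T ∈ P j, S3aux.mT f i T with hr
    have hrnn : 0 ≤ r := Finset.sum_nonneg fun T _ => S3aux.mT_nonneg i T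
    refine ⟨r.toNat, ?_⟩
    rw [ha]
    simp only
    rw [mul_comm, div_mul_cancel₀ _ h3n]
    rw [show ((r.toNat : ℕ) : ℝ) = (r : ℝ) by
      exact_mod_cast congrArg (Int.cast : ℤ → ℝ) (Int.toNat_of_nonneg hrnn)]
    rw [hr]
    push_cast
    rfl
end

section
/- Let f be a perfect k-coloring of the graph D(m,n) (which for m=0 is the Hamming graph H(n,4)) with quotient matrix S, let λ_0 > λ_1 > … > λ_l be the distinct eigenvalues of S, and let i be any color. Then there exists a unique tuple of real numbers (a_1,…,a_l) such that for every t = 0,1,…,l−1: Σ_{j=1}^{l} λ_j^t · a_j = |f^{-1}(i)| · (S^t)_{i,i} − (|f^{-1}(i)|² / 4^{2m+n}) · λ_0^t (where (S^0)_{i,i} = 1); moreover, for every j = 1,…,l the number 4^{2m+n} · a_j is a non-negative integer. -/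
open scoped Classical
open Finset Complex

namespace S4

/-- The connecting set of `D(m,n)` inside the group `DoobV m n`. -/
def conn (m n : ℕ) : Set (DoobV m n) :=
  {v | (∃ i, v.1 i ∈ shrikhandeSet ∧ (∀ j, j ≠ i → v.1 j = 0) ∧ v.2 = 0) ∨
       (∃ i, v.2 i ≠ 0 ∧ (∀ j, j ≠ i → v.2 j = 0) ∧ v.1 = 0)}

lemma shrik_neg {s : ZMod 4 × ZMod 4} (h : s ∈ shrikhandeSet) : -s ∈ shrikhandeSet := by
  simp only [shrikhandeSet, Set.mem_insert_iff, Set.mem_singleton_iff] at h ⊢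
  rcases h with h|h|h|h|h|h <;> subst h <;> decide

lemma shrik_ne_zero {s : ZMod 4 × ZMod 4} (h : s ∈ shrikhandeSet) : s ≠ 0 := by
  simp only [shrikhandeSet, Set.mem_insert_iff, Set.mem_singleton_iff] at h
  rcases h with h|h|h|h|h|h <;> subst h <;> decide

lemma conn_ne_zero {m n : ℕ} {v : DoobV m n} (h : v ∈ conn m n) : v ≠ 0 := by
  rcases h with ⟨i, hs, -, -⟩ | ⟨i, hs, -, -⟩
  · intro h0; rw [h0] at hs; exact shrik_ne_zero hs rfl
  · intro h0; rw [h0] at hs; exact hs rfl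

lemma conn_neg {m n : ℕ} {v : DoobV m n} (h : v ∈ conn m n) : -v ∈ conn m n := by
  rcases h with ⟨i, hs, hj, h2⟩ | ⟨i, hs, hj, h2⟩
  · exact Or.inl ⟨i, shrik_neg hs, fun j hji => by simp [hj j hji], by simp [h2]⟩
  · exact Or.inr ⟨i, by simpa using hs, fun j hji => by simp [hj j hji], by simp [h2]⟩

lemma adj_iff {m n : ℕ} (x y : DoobV m n) :
    (doobGraph m n).Adj x y ↔ x - y ∈ conn m n := by
  rw [doobGraph, SimpleGraph.fromRel_adj]
  constructor
  · rintro ⟨hne, h | h⟩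
    · rcases h with ⟨i, hs, hj, h2⟩ | ⟨i, hs, hj, h2⟩
      · exact Or.inl ⟨i, hs, fun j hji => by simp [sub_eq_zero, hj j hji],
          by simp [sub_eq_zero, h2]⟩
      · exact Or.inr ⟨i, by simp [sub_ne_zero, hs], fun j hji => by
          simp [sub_eq_zero, hj j hji], by simp [sub_eq_zero, h2]⟩
    · have : -(y - x) ∈ conn m n := by
        apply conn_neg
        rcases h with ⟨i, hs, hj, h2⟩ | ⟨i, hs, hj, h2⟩
        · exact Or.inl ⟨i, hs, fun j hji => by simp [sub_eq_zero, hj j hji],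
            by simp [sub_eq_zero, h2]⟩
        · exact Or.inr ⟨i, by simp [sub_ne_zero, hs], fun j hji => by
            simp [sub_eq_zero, hj j hji], by simp [sub_eq_zero, h2]⟩
      simpa using this
  · intro h
    refine ⟨fun he => conn_ne_zero h (by simp [he]), Or.inl ?_⟩
    rcases h with ⟨i, hs, hj, h2⟩ | ⟨i, hs, hj, h2⟩
    · exact Or.inl ⟨i, hs, fun j hji => by
        have := hj j hji; rwa [Prod.fst_sub, Pi.sub_apply, sub_eq_zero] at this,
        by rwa [Prod.snd_sub, sub_eq_zero] at h2⟩
    · exact Or.inr ⟨i, by have := hs; rwa [Prod.snd_sub, Pi.sub_apply, sub_ne_zero] at this,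
        fun j hji => by have := hj j hji; rwa [Prod.snd_sub, Pi.sub_apply, sub_eq_zero] at this,
        by rwa [Prod.fst_sub, sub_eq_zero] at h2⟩

end S4

namespace S4

variable {m n : ℕ}

/-- Bilinear pairing on the group `DoobV m n` with values in `ZMod 4`. -/
def pair (u x : DoobV m n) : ZMod 4 :=
  (∑ i, ((u.1 i).1 * (x.1 i).1 + (u.1 i).2 * (x.1 i).2)) + ∑ i, u.2 i * x.2 i

lemma pair_comm (u x : DoobV m n) : pair u x = pair x u := by
  unfold pair; congr 1 <;> apply Finset.sum_congr rfl <;> intros <;> ring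

lemma pair_add_right (u x y : DoobV m n) : pair u (x + y) = pair u x + pair u y := by
  unfold pair
  simp only [Prod.fst_add, Prod.snd_add, Pi.add_apply, mul_add]
  simp only [Finset.sum_add_distrib]
  abel

lemma pair_zero_right (u : DoobV m n) : pair u 0 = 0 := by
  unfold pair; simp

lemma pair_neg_right (u x : DoobV m n) : pair u (-x) = - pair u x := by
  have := pair_add_right u x (-x)
  rw [add_neg_cancel, pair_zero_right] at this
  linear_combination -this

/-- The character of `DoobV m n` indexed by `u`, evaluated at `x`. -/
noncomputable def psi (u x : DoobV m n) : ℂ := Complex.I ^ (pair u x).val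

lemma I_pow_val_add (a b : ZMod 4) :
    Complex.I ^ (a + b).val = Complex.I ^ a.val * Complex.I ^ b.val := by
  have h4 : Complex.I ^ (4 : ℕ) = 1 := by
    norm_num [pow_succ, Complex.I_mul_I]
  have hval : (a + b).val = (a.val + b.val) % 4 := by
    have := ZMod.val_add a b; simpa using this
  calc Complex.I ^ (a + b).val = Complex.I ^ ((a.val + b.val) % 4) := by rw [hval]
    _ = Complex.I ^ ((a.val + b.val) % 4) * (Complex.I ^ 4) ^ ((a.val + b.val) / 4) := by
        rw [h4]; ring
    _ = Complex.I ^ ((a.val + b.val) % 4 + 4 * ((a.val + b.val) / 4)) := by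
        rw [pow_add, pow_mul]
    _ = Complex.I ^ (a.val + b.val) := by rw [Nat.mod_add_div]
    _ = _ := pow_add _ _ _

lemma psi_add_right (u x y : DoobV m n) : psi u (x + y) = psi u x * psi u y := by
  unfold psi; rw [pair_add_right, I_pow_val_add]

lemma psi_zero_right (u : DoobV m n) : psi u 0 = 1 := by
  unfold psi; rw [pair_zero_right]; simp

lemma psi_eq_one_iff (u x : DoobV m n) : psi u x = 1 ↔ pair u x = 0 := by
  unfold psi
  constructor
  · intro h
    by_contra hne
    have : (pair u x).val = 1 ∨ (pair u x).val = 2 ∨ (pair u x).val = 3 := by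
      have hlt : (pair u x).val < 4 := ZMod.val_lt _
      have h0 : (pair u x).val ≠ 0 := fun h0 => hne (by
        have := (ZMod.val_eq_zero (pair u x)).mp h0; exact this)
      omega
    rcases this with h1|h1|h1 <;> rw [h1] at h <;>
      simp [pow_succ, Complex.I_mul_I, Complex.ext_iff] at h <;> norm_num at h
  · intro h; rw [h]; simp

lemma normSq_psi (u x : DoobV m n) : Complex.normSq (psi u x) = 1 := by
  unfold psi
  rw [map_pow, Complex.normSq_I, one_pow]

lemma psi_conj (u x : DoobV m n) : (starRingEnd ℂ) (psi u x) = psi u (-x) := by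
  have h1 : psi u x * psi u (-x) = 1 := by
    rw [← psi_add_right, add_neg_cancel, psi_zero_right]
  have h2 : psi u x * (starRingEnd ℂ) (psi u x) = 1 := by
    rw [Complex.mul_conj, normSq_psi]; norm_num
  have hne : psi u x ≠ 0 := by
    intro h; rw [h, zero_mul] at h2; exact one_ne_zero h2.symm
  rw [← h1] at h2
  exact mul_left_cancel₀ hne h2

lemma pair_comm_psi (u x : DoobV m n) : psi u x = psi x u := by
  unfold psi; rw [pair_comm]

end S4

namespace S4

variable {m n : ℕ}

/-- basis vector in a Shrikhande coordinate -/
def e1 (i : Fin m) (c : ZMod 4 × ZMod 4) : DoobV m n := (Function.update 0 i c, 0)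

/-- basis vector in a `K₄` coordinate -/
def e2 (i : Fin n) (c : ZMod 4) : DoobV m n := (0, Function.update 0 i c)

lemma pair_e1 (u : DoobV m n) (i : Fin m) (c : ZMod 4 × ZMod 4) :
    pair u (e1 i c) = (u.1 i).1 * c.1 + (u.1 i).2 * c.2 := by
  unfold pair e1
  rw [Finset.sum_eq_single i]
  · simp [Function.update_self]
  · intro b _ hb; simp [Function.update_of_ne hb]
  · simp

lemma pair_e2 (u : DoobV m n) (i : Fin n) (c : ZMod 4) :
    pair u (e2 i c) = u.2 i * c := by
  unfold pair e2
  have h1 : ∑ i_1 : Fin m, ((u.1 i_1).1 * ((0 : Fin m → ZMod 4 × ZMod 4) i_1).1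
      + (u.1 i_1).2 * ((0 : Fin m → ZMod 4 × ZMod 4) i_1).2) = 0 := by simp
  dsimp only
  rw [h1, zero_add, Finset.sum_eq_single i]
  · simp [Function.update_self]
  · intro b _ hb; simp [Function.update_of_ne hb]
  · simp

lemma exists_pair_ne_zero {u : DoobV m n} (hu : u ≠ 0) : ∃ v, pair u v ≠ 0 := by
  by_contra hc
  push_neg at hc
  apply hu
  have h1 : ∀ i, u.1 i = 0 := by
    intro i
    have ha := hc (e1 i (1, 0))
    have hb := hc (e1 i (0, 1))
    rw [pair_e1] at ha hb
    simp at ha hb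
    exact Prod.ext ha hb
  have h2 : ∀ i, u.2 i = 0 := by
    intro i
    have ha := hc (e2 i 1)
    rw [pair_e2] at ha
    simpa using ha
  exact Prod.ext (funext h1) (funext h2)

lemma sum_psi (u : DoobV m n) :
    ∑ x : DoobV m n, psi u x =
      if u = 0 then (Fintype.card (DoobV m n) : ℂ) else 0 := by
  split_ifs with h
  · subst h
    have : ∀ x : DoobV m n, psi 0 x = 1 := by
      intro x; rw [pair_comm_psi, psi_zero_right]
    simp [this]
  · obtain ⟨v, hv⟩ := exists_pair_ne_zero h
    have hpsi : psi u v ≠ 1 := fun h1 => hv ((psi_eq_one_iff u v).mp h1)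
    have key : psi u v * ∑ x : DoobV m n, psi u x = ∑ x : DoobV m n, psi u x := by
      rw [Finset.mul_sum]
      rw [← Equiv.sum_comp (Equiv.addRight v) (fun x => psi u x)]
      apply Finset.sum_congr rfl
      intro x _
      simp only [Equiv.coe_addRight]
      rw [psi_add_right]; ring
    by_contra hs
    have key2 : psi u v * ∑ x : DoobV m n, psi u x = 1 * ∑ x : DoobV m n, psi u x := by
      rw [key, one_mul]
    exact hpsi (mul_right_cancel₀ hs key2)

lemma sum_psi_left (v : DoobV m n) :
    ∑ u : DoobV m n, psi u v =
      if v = 0 then (Fintype.card (DoobV m n) : ℂ) else 0 := by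
  rw [← sum_psi v]
  exact Finset.sum_congr rfl fun u _ => pair_comm_psi u v

lemma card_doobV : (Fintype.card (DoobV m n)) = 4 ^ (2 * m + n) := by
  rw [Fintype.card_prod, Fintype.card_fun, Fintype.card_fun]
  simp only [Fintype.card_prod, ZMod.card, Fintype.card_fin]
  rw [show (4 * 4 : ℕ) = 4 ^ 2 from rfl, ← pow_mul, ← pow_add, Nat.mul_comm]

end S4

namespace S4

/-- The connecting set as a finset. -/
noncomputable def connF (m n : ℕ) : Finset (DoobV m n) :=
  Finset.univ.filter (· ∈ conn m n)

/-- The eigenvalue function: `theta u` is the eigenvalue of the adjacency operator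
on the character `psi u`. -/
noncomputable def theta (m n : ℕ) (u : DoobV m n) : ℂ := ∑ s ∈ connF m n, psi u s

/-- Number of walks: `wk m n t z` is the number of ways to write `z` as an ordered
sum of `t` elements of the connecting set. -/
noncomputable def wk (m n : ℕ) : ℕ → DoobV m n → ℕ
  | 0, z => if z = 0 then 1 else 0
  | (t+1), z => ∑ s ∈ connF m n, wk m n t (z - s)

variable {m n : ℕ}

lemma theta_pow (u : DoobV m n) (t : ℕ) :
    theta m n u ^ t = ∑ z : DoobV m n, (wk m n t z : ℂ) * psi u z := by
  induction t with
  | zero =>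
    rw [pow_zero]
    have h : ∀ z : DoobV m n, ((wk m n 0 z : ℂ)) * psi u z = if z = 0 then psi u 0 else 0 := by
      intro z; by_cases h : z = 0 <;> simp [wk, h]
    rw [Finset.sum_congr rfl fun z _ => h z]
    simp [psi_zero_right]
  | succ t ih =>
    rw [pow_succ, ih]
    calc (∑ z : DoobV m n, (wk m n t z : ℂ) * psi u z) * theta m n u
        = ∑ s ∈ connF m n, ∑ z : DoobV m n, (wk m n t z : ℂ) * psi u (s + z) := by
          rw [theta, Finset.mul_sum]
          apply Finset.sum_congr rfl; intro s _
          rw [Finset.sum_mul]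
          apply Finset.sum_congr rfl; intro z _
          rw [psi_add_right]; ring
      _ = ∑ s ∈ connF m n, ∑ z : DoobV m n, (wk m n t (z - s) : ℂ) * psi u z := by
          apply Finset.sum_congr rfl; intro s _
          rw [← Equiv.sum_comp (Equiv.addLeft s) (fun z => (wk m n t (z - s) : ℂ) * psi u z)]
          apply Finset.sum_congr rfl; intro z _
          simp
      _ = ∑ z : DoobV m n, (wk m n (t+1) z : ℂ) * psi u z := by
          rw [Finset.sum_comm]
          apply Finset.sum_congr rfl; intro z _
          rw [← Finset.sum_mul, wk]
          push_cast
          ring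

lemma mem_connF {v : DoobV m n} : v ∈ connF m n ↔ v ∈ conn m n := by
  simp [connF]

lemma theta_neg_arg (u : DoobV m n) : ∑ s ∈ connF m n, psi u (-s) = theta m n u := by
  rw [theta]
  apply Finset.sum_nbij' (fun s => -s) (fun s => -s)
  · intro a ha; exact mem_connF.mpr (conn_neg (mem_connF.mp ha))
  · intro a ha; exact mem_connF.mpr (conn_neg (mem_connF.mp ha))
  · intro a _; simp
  · intro a _; simp
  · intro a _; rfl

lemma conj_theta (u : DoobV m n) : (starRingEnd ℂ) (theta m n u) = theta m n u := by
  rw [theta, map_sum]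
  rw [Finset.sum_congr rfl fun s _ => psi_conj u s]
  exact theta_neg_arg u

/-- the real value of `theta`. -/
noncomputable def thetaR (m n : ℕ) (u : DoobV m n) : ℝ := (theta m n u).re

lemma theta_eq_ofReal (u : DoobV m n) : theta m n u = (thetaR m n u : ℂ) :=
  (Complex.conj_eq_iff_re.mp (conj_theta u)).symm

end S4

namespace S4

variable {m n : ℕ} {k : ℕ}

/-- The color class of `c` as a finset. -/
noncomputable def colorF (f : DoobV m n → Fin k) (c : Fin k) : Finset (DoobV m n) :=
  Finset.univ.filter (f · = c)

/-- Fourier coefficient of the color class `c` at frequency `u`. -/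
noncomputable def Wc (f : DoobV m n → Fin k) (u : DoobV m n) (c : Fin k) : ℂ :=
  ∑ x ∈ colorF f c, psi u (-x)

lemma conj_Wc (f : DoobV m n → Fin k) (u : DoobV m n) (c : Fin k) :
    (starRingEnd ℂ) (Wc f u c) = ∑ x ∈ colorF f c, psi u x := by
  rw [Wc, map_sum]
  apply Finset.sum_congr rfl; intro x _
  rw [psi_conj, neg_neg]

lemma sum_nbrs_eq {α : Type*} [AddCommMonoid α] (x : DoobV m n) (g : DoobV m n → α) :
    ∑ s ∈ connF m n, g (x - s)
      = ∑ y ∈ Finset.univ.filter ((doobGraph m n).Adj x ·), g y := by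
  apply Finset.sum_nbij' (fun s => x - s) (fun y => x - y)
  · intro s hs
    simp only [Finset.mem_filter, Finset.mem_univ, true_and]
    rw [adj_iff]
    simpa using mem_connF.mp hs
  · intro y hy
    rw [mem_connF]
    simp only [Finset.mem_filter, Finset.mem_univ, true_and] at hy
    exact (adj_iff x y).mp hy
  · intro s _; simp
  · intro y _; simp
  · intro s _; rfl

variable (f : DoobV m n → Fin k) (S : Matrix (Fin k) (Fin k) ℤ)

lemma card_nbr_fiber (hf : IsPerfectColoring (doobGraph m n) f S) (x : DoobV m n) (c : Fin k) :
    ((Finset.univ.filter (fun y => (doobGraph m n).Adj x y ∧ f y = c)).card : ℤ)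
      = S (f x) c := by
  rw [← hf.2 x c]
  congr 1
  rw [← Set.ncard_coe_finset]
  congr 1
  ext y; simp

lemma sum_adj_color {R : Type*} [CommRing R] (hf : IsPerfectColoring (doobGraph m n) f S)
    (x : DoobV m n) (g : Fin k → R) :
    ∑ y ∈ Finset.univ.filter ((doobGraph m n).Adj x ·), g (f y)
      = ∑ c : Fin k, ((S (f x) c : ℤ) : R) * g c := by
  rw [← Finset.sum_fiberwise (Finset.univ.filter ((doobGraph m n).Adj x ·)) f
      (fun y => g (f y))]
  apply Finset.sum_congr rfl
  intro c _
  have hterm : ∀ y ∈ (Finset.univ.filter ((doobGraph m n).Adj x ·)).filter (fun y => f y = c),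
      g (f y) = g c := by
    intro y hy; simp only [Finset.mem_filter] at hy; rw [hy.2]
  rw [Finset.sum_congr rfl hterm, Finset.sum_const, nsmul_eq_mul]
  congr 1
  have hcc : (((Finset.univ.filter ((doobGraph m n).Adj x ·)).filter
      (fun y => f y = c)).card : ℤ) = S (f x) c := by
    rw [← card_nbr_fiber f S hf x c]
    congr 1
    rw [Finset.filter_filter]
  exact_mod_cast congrArg (fun z : ℤ => (z : R)) hcc

lemma wk_color (hf : IsPerfectColoring (doobGraph m n) f S) (i : Fin k) (t : ℕ) :
    ∀ x : DoobV m n,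
    ((∑ y ∈ colorF f i, wk m n t (x - y) : ℕ) : ℤ) = (S ^ t) (f x) i := by
  induction t with
  | zero =>
    intro x
    rw [pow_zero, Matrix.one_apply]
    have h : ∀ y ∈ colorF f i, wk m n 0 (x - y) = if y = x then 1 else 0 := by
      intro y _
      by_cases h : y = x
      · simp [wk, h]
      · have : x - y ≠ 0 := sub_ne_zero.mpr (Ne.symm h)
        simp [wk, this, h]
    rw [Finset.sum_congr rfl h, Finset.sum_ite_eq' (colorF f i) x (fun _ => 1)]
    by_cases hx : f x = i <;> simp [colorF, hx]
  | succ t ih =>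
    intro x
    have hsw : (∑ y ∈ colorF f i, wk m n (t+1) (x - y))
        = ∑ s ∈ connF m n, ∑ y ∈ colorF f i, wk m n t ((x - s) - y) := by
      simp only [wk]
      rw [Finset.sum_comm]
      apply Finset.sum_congr rfl; intro s _
      apply Finset.sum_congr rfl; intro y _
      congr 1
      rw [sub_right_comm]
    rw [hsw]
    push_cast [Nat.cast_sum]
    have : ∀ s ∈ connF m n,
        ((∑ y ∈ colorF f i, wk m n t ((x - s) - y) : ℕ) : ℤ) = (S ^ t) (f (x - s)) i :=
      fun s _ => ih (x - s)
    rw [show (∑ s ∈ connF m n, ∑ y ∈ colorF f i, ((wk m n t (x - s - y) : ℕ) : ℤ))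
        = ∑ s ∈ connF m n, (S ^ t) (f (x - s)) i from by
      apply Finset.sum_congr rfl; intro s hs
      rw [← this s hs]; push_cast; rfl]
    rw [sum_nbrs_eq x (fun y => (S ^ t) (f y) i), sum_adj_color f S hf x (fun c => (S ^ t) c i)]
    rw [pow_succ', Matrix.mul_apply]
    simp

lemma master (i : Fin k) (t : ℕ) :
    ∑ u : DoobV m n, theta m n u ^ t * (Wc f u i * (starRingEnd ℂ) (Wc f u i))
      = (Fintype.card (DoobV m n) : ℂ) *
          ∑ x ∈ colorF f i, ∑ y ∈ colorF f i, (wk m n t (x - y) : ℂ) := by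
  have expand : ∀ u : DoobV m n, theta m n u ^ t * (Wc f u i * (starRingEnd ℂ) (Wc f u i))
      = ∑ z : DoobV m n, ∑ x ∈ colorF f i, ∑ y ∈ colorF f i,
          (wk m n t z : ℂ) * psi u (z - x + y) := by
    intro u
    have hB : Wc f u i * (starRingEnd ℂ) (Wc f u i)
        = ∑ x ∈ colorF f i, ∑ y ∈ colorF f i, psi u (y - x) := by
      rw [conj_Wc, Wc, Finset.sum_mul_sum]
      apply Finset.sum_congr rfl; intro x _
      apply Finset.sum_congr rfl; intro y _
      rw [← psi_add_right]
      congr 1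
      abel
    rw [theta_pow, hB, Finset.sum_mul_sum]
    apply Finset.sum_congr rfl; intro z _
    apply Finset.sum_congr rfl; intro x _
    rw [Finset.mul_sum]
    apply Finset.sum_congr rfl; intro y _
    rw [mul_assoc, ← psi_add_right]
    have h : z + (y - x) = z - x + y := by abel
    rw [h]
  rw [Finset.sum_congr rfl fun u _ => expand u]
  -- reorder : u z x y → z x y u
  rw [Finset.sum_comm]
  have step1 : ∀ z : DoobV m n,
      (∑ u : DoobV m n, ∑ x ∈ colorF f i, ∑ y ∈ colorF f i,
        (wk m n t z : ℂ) * psi u (z - x + y))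
      = ∑ x ∈ colorF f i, ∑ y ∈ colorF f i,
          (if z = x - y then (wk m n t z : ℂ) * (Fintype.card (DoobV m n) : ℂ) else 0) := by
    intro z
    rw [Finset.sum_comm]
    apply Finset.sum_congr rfl; intro x _
    rw [Finset.sum_comm]
    apply Finset.sum_congr rfl; intro y _
    rw [← Finset.mul_sum, sum_psi_left]
    have hc : (z - x + y = 0) ↔ (z = x - y) := by
      constructor
      · intro h; have : z = -(y - x) := by linear_combination h
        rw [this]; abel
      · intro h; rw [h]; abel
    by_cases hz : z = x - y
    · rw [if_pos (hc.mpr hz), if_pos hz]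
    · rw [if_neg (fun h => hz (hc.mp h)), if_neg hz, mul_zero]
  rw [Finset.sum_congr rfl fun z _ => step1 z]
  rw [Finset.sum_comm]
  rw [Finset.mul_sum]
  apply Finset.sum_congr rfl; intro x _
  rw [Finset.sum_comm, Finset.mul_sum]
  apply Finset.sum_congr rfl; intro y _
  rw [Finset.sum_ite_eq' Finset.univ (x - y) (fun z => (wk m n t z : ℂ) * _)]
  simp [mul_comm]

end S4

namespace S4

variable {m n k : ℕ}

lemma psi_zero_left (x : DoobV m n) : psi 0 x = 1 := by
  rw [pair_comm_psi, psi_zero_right]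

lemma theta_zero : theta m n 0 = ((connF m n).card : ℂ) := by
  rw [theta]
  rw [Finset.sum_congr rfl fun s _ => psi_zero_left s]
  simp

lemma thetaR_zero : thetaR m n 0 = ((connF m n).card : ℝ) := by
  rw [thetaR, theta_zero]
  simp

lemma Wc_zero (f : DoobV m n → Fin k) (c : Fin k) :
    Wc f 0 c = ((colorF f c).card : ℂ) := by
  rw [Wc]
  rw [Finset.sum_congr rfl fun x _ => psi_zero_left (-x)]
  simp

variable (f : DoobV m n → Fin k) (S : Matrix (Fin k) (Fin k) ℤ)

lemma row_sum (hf : IsPerfectColoring (doobGraph m n) f S) (c : Fin k) :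
    ∑ j, S c j = ((connF m n).card : ℤ) := by
  obtain ⟨x, hx⟩ := hf.1 c
  have h1 := sum_adj_color f S hf x (fun _ => (1 : ℤ))
  rw [← sum_nbrs_eq x (fun _ => (1 : ℤ))] at h1
  simp only [Finset.sum_const, nsmul_eq_mul, mul_one, Int.cast_id] at h1
  rw [← hx]
  exact h1.symm

lemma S_nonneg (hf : IsPerfectColoring (doobGraph m n) f S) (c j : Fin k) :
    0 ≤ S c j := by
  obtain ⟨x, hx⟩ := hf.1 c
  rw [← hx, ← hf.2 x j]
  exact Int.natCast_nonneg _

lemma abs_eig_le (hf : IsPerfectColoring (doobGraph m n) f S) {x : ℝ} {v : Fin k → ℝ}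
    (hv : v ≠ 0) (heq : (S.map ((↑) : ℤ → ℝ)).mulVec v = x • v) :
    |x| ≤ ((connF m n).card : ℝ) := by
  obtain ⟨c0, hc0ne⟩ := Function.ne_iff.mp hv
  obtain ⟨c, -, hc⟩ := Finset.exists_max_image Finset.univ (fun j => |v j|)
    ⟨c0, Finset.mem_univ c0⟩
  have hvc : 0 < |v c| := lt_of_lt_of_le (abs_pos.mpr hc0ne) (hc c0 (Finset.mem_univ c0))
  have h1 : x * v c = ∑ j, ((S c j : ℤ) : ℝ) * v j := by
    have h := congrFun heq c
    rw [Matrix.mulVec, dotProduct] at h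
    simp only [Matrix.map_apply, Pi.smul_apply, smul_eq_mul] at h
    rw [← h]
  have hnn : ∀ j : Fin k, (0:ℝ) ≤ ((S c j : ℤ) : ℝ) := by
    intro j; exact_mod_cast S_nonneg f S hf c j
  have h2 : |x| * |v c| ≤ (∑ j, ((S c j : ℤ) : ℝ)) * |v c| := by
    rw [← abs_mul, h1]
    calc |∑ j, ((S c j : ℤ) : ℝ) * v j| ≤ ∑ j, |((S c j : ℤ) : ℝ) * v j| :=
          Finset.abs_sum_le_sum_abs _ _
      _ = ∑ j, ((S c j : ℤ) : ℝ) * |v j| := by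
          apply Finset.sum_congr rfl; intro j _
          rw [abs_mul, _root_.abs_of_nonneg (hnn j)]
      _ ≤ ∑ j, ((S c j : ℤ) : ℝ) * |v c| :=
          Finset.sum_le_sum fun j _ =>
            mul_le_mul_of_nonneg_left (hc j (Finset.mem_univ j)) (hnn j)
      _ = _ := by rw [← Finset.sum_mul]
  have h3 : (∑ j, ((S c j : ℤ) : ℝ)) = ((connF m n).card : ℝ) := by
    exact_mod_cast row_sum f S hf c
  rw [h3] at h2
  exact le_of_mul_le_mul_right h2 hvc

lemma L0_eq {l : ℕ} (hf : IsPerfectColoring (doobGraph m n) f S)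
    (L : Fin (l + 1) → ℝ) (hmono : StrictAnti L)
    (heig : ∀ x : ℝ,
      (∃ v : Fin k → ℝ, v ≠ 0 ∧ (S.map ((↑) : ℤ → ℝ)).mulVec v = x • v) ↔ ∃ j, L j = x)
    (i : Fin k) :
    L 0 = ((connF m n).card : ℝ) := by
  have hone : (fun _ => (1:ℝ)) ≠ (0 : Fin k → ℝ) := by
    intro h
    exact one_ne_zero (congrFun h i)
  have hvec : (S.map ((↑) : ℤ → ℝ)).mulVec (fun _ => (1:ℝ))
      = ((connF m n).card : ℝ) • (fun _ => (1:ℝ)) := by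
    funext c
    rw [Matrix.mulVec, dotProduct]
    simp only [Matrix.map_apply, mul_one, Pi.smul_apply, smul_eq_mul]
    exact_mod_cast row_sum f S hf c
  obtain ⟨j0, hj0⟩ := (heig _).mp ⟨fun _ => 1, hone, hvec⟩
  obtain ⟨v, hv, hveq⟩ := (heig (L 0)).mpr ⟨0, rfl⟩
  have hb := abs_eig_le f S hf hv hveq
  have h1 : L 0 ≤ ((connF m n).card : ℝ) := le_trans (le_abs_self _) hb
  have h2 : ((connF m n).card : ℝ) ≤ L 0 := hj0 ▸ hmono.antitone (Fin.zero_le j0)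
  linarith

lemma re_psi_le (u x : DoobV m n) : (psi u x).re ≤ 1 := by
  rw [psi]
  have hlt : (pair u x).val < 4 := ZMod.val_lt _
  interval_cases h : (pair u x).val <;>
    norm_num [pow_succ, Complex.I_mul_I]

lemma re_psi_eq_one (u x : DoobV m n) (h : (psi u x).re = 1) : psi u x = 1 := by
  rw [psi] at h ⊢
  have hlt : (pair u x).val < 4 := ZMod.val_lt _
  interval_cases hv : (pair u x).val <;> revert h <;>
    norm_num [pow_succ, Complex.I_mul_I, Complex.I_re]

lemma e1_mem_conn (i : Fin m) {c : ZMod 4 × ZMod 4} (hc : c ∈ shrikhandeSet) :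
    (e1 i c : DoobV m n) ∈ conn m n :=
  Or.inl ⟨i, by simpa [e1] using hc, fun j hj => by simp [e1, Function.update_of_ne hj], rfl⟩

lemma e2_mem_conn (i : Fin n) {c : ZMod 4} (hc : c ≠ 0) :
    (e2 i c : DoobV m n) ∈ conn m n :=
  Or.inr ⟨i, by simpa [e2] using hc, fun j hj => by simp [e2, Function.update_of_ne hj], rfl⟩

lemma mem_shrik_10 : ((1 : ZMod 4), (0 : ZMod 4)) ∈ shrikhandeSet := by
  simp [shrikhandeSet]

lemma mem_shrik_01 : ((0 : ZMod 4), (1 : ZMod 4)) ∈ shrikhandeSet := by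
  simp [shrikhandeSet]

lemma theta_eq_card_imp (u : DoobV m n)
    (h : thetaR m n u = ((connF m n).card : ℝ)) : u = 0 := by
  have hall : ∀ s ∈ connF m n, pair u s = 0 := by
    by_contra hcon
    push_neg at hcon
    obtain ⟨s0, hs0, hps0⟩ := hcon
    have hlt : (psi u s0).re < 1 :=
      lt_of_le_of_ne (re_psi_le u s0)
        (fun he => hps0 ((psi_eq_one_iff u s0).mp (re_psi_eq_one u s0 he)))
    have hsum : thetaR m n u = ∑ s ∈ connF m n, (psi u s).re := by
      rw [thetaR, theta, Complex.re_sum]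
    have hless : ∑ s ∈ connF m n, (psi u s).re < ∑ s ∈ connF m n, (1:ℝ) :=
      Finset.sum_lt_sum (fun s _ => re_psi_le u s) ⟨s0, hs0, hlt⟩
    rw [Finset.sum_const, nsmul_eq_mul, mul_one] at hless
    rw [hsum] at h
    linarith
  have h1 : ∀ i : Fin m, u.1 i = 0 := by
    intro i
    have ha := hall (e1 i (1,0)) (mem_connF.mpr (e1_mem_conn i mem_shrik_10))
    have hb := hall (e1 i (0,1)) (mem_connF.mpr (e1_mem_conn i mem_shrik_01))
    rw [pair_e1] at ha hb
    simp at ha hb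
    exact Prod.ext ha hb
  have h2 : ∀ i : Fin n, u.2 i = 0 := by
    intro i
    have ha := hall (e2 i 1) (mem_connF.mpr (e2_mem_conn i (by decide : (1 : ZMod 4) ≠ 0)))
    rw [pair_e2] at ha
    simpa using ha
  exact Prod.ext (funext h1) (funext h2)

lemma theta_is_eig {l : ℕ} (hf : IsPerfectColoring (doobGraph m n) f S)
    (L : Fin (l + 1) → ℝ)
    (heig : ∀ x : ℝ,
      (∃ v : Fin k → ℝ, v ≠ 0 ∧ (S.map ((↑) : ℤ → ℝ)).mulVec v = x • v) ↔ ∃ j, L j = x)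
    (u : DoobV m n) (i : Fin k) (hFc : Wc f u i ≠ 0) :
    ∃ j, L j = thetaR m n u := by
  apply (heig _).mp
  -- complex left-eigenvector equation
  have hW : Matrix.vecMul (Wc f u) (S.map ((↑) : ℤ → ℂ)) = theta m n u • (Wc f u) := by
    funext j
    rw [Matrix.vecMul, dotProduct]
    simp only [Matrix.map_apply, Pi.smul_apply, smul_eq_mul]
    have hScard : ∀ x : DoobV m n, ((S (f x) j : ℤ) : ℂ)
        = ∑ s ∈ connF m n, (if f (x - s) = j then 1 else 0 : ℂ) := by
      intro x
      rw [sum_nbrs_eq x (fun y => (if f y = j then 1 else 0 : ℂ)), Finset.sum_boole]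
      have hcc : (((Finset.univ.filter ((doobGraph m n).Adj x ·)).filter
          (fun y => f y = j)).card : ℤ) = S (f x) j := by
        rw [← card_nbr_fiber f S hf x j, Finset.filter_filter]
      exact_mod_cast hcc.symm
    calc ∑ c : Fin k, Wc f u c * ((S c j : ℤ) : ℂ)
        = ∑ c : Fin k, ∑ x ∈ colorF f c, psi u (-x) * ((S (f x) j : ℤ) : ℂ) := by
          apply Finset.sum_congr rfl; intro c _
          rw [Wc, Finset.sum_mul]
          apply Finset.sum_congr rfl; intro x hx
          simp only [colorF, Finset.mem_filter] at hx
          rw [hx.2]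
      _ = ∑ x : DoobV m n, psi u (-x) * ((S (f x) j : ℤ) : ℂ) :=
          Finset.sum_fiberwise Finset.univ f _
      _ = ∑ s ∈ connF m n, ∑ x : DoobV m n,
            psi u (-x) * (if f (x - s) = j then 1 else 0 : ℂ) := by
          rw [Finset.sum_comm]
          apply Finset.sum_congr rfl; intro x _
          rw [hScard x, Finset.mul_sum]
      _ = ∑ s ∈ connF m n, psi u (-s) * ∑ y : DoobV m n,
            psi u (-y) * (if f y = j then 1 else 0 : ℂ) := by
          apply Finset.sum_congr rfl; intro s _
          rw [Finset.mul_sum]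
          rw [← Equiv.sum_comp (Equiv.addRight s)
            (fun x => psi u (-x) * (if f (x - s) = j then 1 else 0 : ℂ))]
          apply Finset.sum_congr rfl; intro y _
          simp only [Equiv.coe_addRight, add_sub_cancel_right]
          rw [neg_add, psi_add_right]
          ring
      _ = theta m n u * Wc f u j := by
          rw [← Finset.sum_mul, theta_neg_arg]
          congr 1
          rw [Wc, colorF, Finset.sum_filter]
          apply Finset.sum_congr rfl; intro y _
          by_cases hy : f y = j <;> simp [hy]
  -- pass to determinant over ℂ
  have hWne : Wc f u ≠ 0 := fun h => hFc (congrFun h i)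
  have hker : Matrix.vecMul (Wc f u) (S.map ((↑) : ℤ → ℂ) - theta m n u • 1) = 0 := by
    rw [Matrix.vecMul_sub, hW]
    have hsm : Matrix.vecMul (Wc f u) (theta m n u • (1 : Matrix (Fin k) (Fin k) ℂ))
        = theta m n u • Wc f u := by
      funext j
      rw [Matrix.vecMul, dotProduct]
      simp [Matrix.smul_apply, Matrix.one_apply, mul_ite, mul_comm]
    rw [hsm]
    simp
  have hdetC : (S.map ((↑) : ℤ → ℂ) - theta m n u • 1).det = 0 :=
    (Matrix.exists_vecMul_eq_zero_iff).mp ⟨Wc f u, hWne, hker⟩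
  have hmap : S.map ((↑) : ℤ → ℂ) - theta m n u • 1
      = ((S.map ((↑) : ℤ → ℝ)) - thetaR m n u • 1).map Complex.ofRealHom := by
    funext a b
    simp only [Matrix.map_apply, Matrix.sub_apply, Matrix.smul_apply, Matrix.one_apply,
      theta_eq_ofReal u, smul_eq_mul, mul_ite, mul_one, mul_zero]
    push_cast
    split_ifs <;> simp
  have hdetR : ((S.map ((↑) : ℤ → ℝ)) - thetaR m n u • 1).det = 0 := by
    have h0 := RingHom.map_det Complex.ofRealHom ((S.map ((↑) : ℤ → ℝ)) - thetaR m n u • 1)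
    rw [RingHom.mapMatrix_apply, ← hmap, hdetC] at h0
    simp only [Complex.ofRealHom_eq_coe] at h0
    exact_mod_cast h0
  obtain ⟨v, hv0, hmv⟩ := (Matrix.exists_mulVec_eq_zero_iff).mpr hdetR
  refine ⟨v, hv0, ?_⟩
  rw [Matrix.sub_mulVec] at hmv
  have h1 : (thetaR m n u • (1 : Matrix (Fin k) (Fin k) ℝ)).mulVec v = thetaR m n u • v := by
    rw [Matrix.smul_mulVec, Matrix.one_mulVec]
  rw [h1, sub_eq_zero] at hmv
  exact hmv

end S4

namespace S4

variable {m n k : ℕ}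

lemma psi_gauss (u x : DoobV m n) : ∃ a b : ℤ, psi u x = (a : ℂ) + (b : ℂ) * Complex.I := by
  rw [psi]
  have hlt : (pair u x).val < 4 := ZMod.val_lt _
  interval_cases h : (pair u x).val
  · exact ⟨1, 0, by norm_num⟩
  · exact ⟨0, 1, by norm_num⟩
  · exact ⟨-1, 0, by norm_num [pow_succ, Complex.I_mul_I]⟩
  · exact ⟨0, -1, by norm_num [pow_succ, Complex.I_mul_I]⟩

lemma normSq_Wc_nat (f : DoobV m n → Fin k) (u : DoobV m n) (c : Fin k) :
    ∃ r : ℕ, Complex.normSq (Wc f u c) = r := by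
  have hG : ∀ s : Finset (DoobV m n),
      ∃ a b : ℤ, ∑ x ∈ s, psi u (-x) = (a : ℂ) + (b : ℂ) * Complex.I := by
    intro s
    induction s using Finset.induction_on with
    | empty => exact ⟨0, 0, by simp⟩
    | @insert x s hx ih =>
      obtain ⟨a, b, ihe⟩ := ih
      obtain ⟨a0, b0, h0⟩ := psi_gauss u (-x)
      exact ⟨a0 + a, b0 + b, by rw [Finset.sum_insert hx, ihe, h0]; push_cast; ring⟩
  obtain ⟨a, b, hab⟩ := hG (colorF f c)
  refine ⟨a.natAbs ^ 2 + b.natAbs ^ 2, ?_⟩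
  rw [Wc, hab]
  rw [show ((a : ℂ) + (b : ℂ) * Complex.I)
      = (((a : ℤ) : ℝ) : ℂ) + (((b : ℤ) : ℝ) : ℂ) * Complex.I by push_cast; ring]
  rw [Complex.normSq_add_mul_I]
  push_cast [Nat.cast_natAbs]
  rw [_root_.sq_abs, _root_.sq_abs]

end S4

/-- Theorem 1 for `D(m,n)` (Statement 4): for a perfect coloring `f` of `D(m,n)`
(with `D(0,n) = H(n,4)`) with quotient matrix `S` whose distinct eigenvalues are
`L 0 > L 1 > … > L l`, and any color `i`, the Vandermonde system has a unique solution
`(a 0, …, a (l-1))` (indexed so that `a j` corresponds to the eigenvalue `L (j+1)`),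
and `4^(2m+n) * a j` is a non-negative integer for every `j`. -/
theorem statement4 (m n : ℕ) {k l : ℕ} (f : DoobV m n → Fin k)
    (S : Matrix (Fin k) (Fin k) ℤ)
    (hf : IsPerfectColoring (doobGraph m n) f S)
    (L : Fin (l + 1) → ℝ) (hmono : StrictAnti L)
    (heig : ∀ x : ℝ,
      (∃ v : Fin k → ℝ, v ≠ 0 ∧ (S.map ((↑) : ℤ → ℝ)).mulVec v = x • v) ↔ ∃ j, L j = x)
    (i : Fin k) :
    ∃ a : Fin l → ℝ,
      (∀ t : ℕ, t < l →
        ∑ j : Fin l, (L j.succ) ^ t * a j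
          = ((f ⁻¹' {i}).ncard : ℝ) * (((S ^ t) i i : ℤ) : ℝ)
            - (((f ⁻¹' {i}).ncard : ℝ) ^ 2 / 4 ^ (2 * m + n)) * (L 0) ^ t) ∧
      (∀ b : Fin l → ℝ,
        (∀ t : ℕ, t < l →
          ∑ j : Fin l, (L j.succ) ^ t * b j
            = ((f ⁻¹' {i}).ncard : ℝ) * (((S ^ t) i i : ℤ) : ℝ)
              - (((f ⁻¹' {i}).ncard : ℝ) ^ 2 / 4 ^ (2 * m + n)) * (L 0) ^ t) → b = a) ∧
      (∀ j : Fin l, ∃ r : ℕ, (4 ^ (2 * m + n) : ℝ) * a j = r) := by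
  classical
  have hL0 : L 0 = ((S4.connF m n).card : ℝ) := S4.L0_eq f S hf L hmono heig i
  have hNpos : (0 : ℝ) < (Fintype.card (DoobV m n) : ℝ) := by
    exact_mod_cast Fintype.card_pos
  have hNne : (Fintype.card (DoobV m n) : ℝ) ≠ 0 := ne_of_gt hNpos
  have hNval : ((Fintype.card (DoobV m n) : ℕ) : ℝ) = (4 : ℝ) ^ (2 * m + n) := by
    rw [S4.card_doobV]; push_cast; ring
  have hncard : ((f ⁻¹' {i}).ncard : ℝ) = ((S4.colorF f i).card : ℝ) := by
    have h : f ⁻¹' {i} = ↑(S4.colorF f i) := by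
      ext x; simp [S4.colorF]
    rw [h, Set.ncard_coe_finset]
  -- the real master identity
  have masterR : ∀ t : ℕ,
      ∑ u : DoobV m n, S4.thetaR m n u ^ t * Complex.normSq (S4.Wc f u i)
        = (Fintype.card (DoobV m n) : ℝ) * (((S4.colorF f i).card : ℝ)
            * (((S ^ t) i i : ℤ) : ℝ)) := by
    intro t
    have hC := S4.master f i t
    have hsum : ∑ x ∈ S4.colorF f i, ∑ y ∈ S4.colorF f i, (S4.wk m n t (x - y) : ℂ)
        = ((S4.colorF f i).card : ℂ) * (((S ^ t) i i : ℤ) : ℂ) := by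
      have hx : ∀ x ∈ S4.colorF f i,
          (∑ y ∈ S4.colorF f i, (S4.wk m n t (x - y) : ℂ)) = (((S ^ t) i i : ℤ) : ℂ) := by
        intro x hx
        have h1 := S4.wk_color f S hf i t x
        have hfx : f x = i := by simpa [S4.colorF] using hx
        rw [hfx] at h1
        rw [← h1]
        push_cast
        rfl
      rw [Finset.sum_congr rfl hx, Finset.sum_const, nsmul_eq_mul]
    rw [hsum] at hC
    have hL : ∀ u : DoobV m n,
        S4.theta m n u ^ t * (S4.Wc f u i * (starRingEnd ℂ) (S4.Wc f u i))
          = ((S4.thetaR m n u ^ t * Complex.normSq (S4.Wc f u i) : ℝ) : ℂ) := by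
      intro u
      rw [S4.theta_eq_ofReal u, Complex.mul_conj]
      push_cast
      ring
    rw [Finset.sum_congr rfl fun u _ => hL u] at hC
    push_cast at hC
    exact_mod_cast hC
  -- grouped sums
  set Uset : Fin l → Finset (DoobV m n) := fun j =>
    Finset.univ.filter (fun u => u ≠ 0 ∧ S4.thetaR m n u = L j.succ) with hUset
  set aa : Fin l → ℝ := fun j =>
    (∑ u ∈ Uset j, Complex.normSq (S4.Wc f u i)) / (Fintype.card (DoobV m n) : ℝ) with haa
  have key : ∀ t : ℕ,
      ∑ j : Fin l, L j.succ ^ t * (∑ u ∈ Uset j, Complex.normSq (S4.Wc f u i))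
        = (Fintype.card (DoobV m n) : ℝ) * (((S4.colorF f i).card : ℝ)
            * (((S ^ t) i i : ℤ) : ℝ))
          - ((S4.colorF f i).card : ℝ) ^ 2 * L 0 ^ t := by
    intro t
    have hsplit : ∑ u : DoobV m n, S4.thetaR m n u ^ t * Complex.normSq (S4.Wc f u i)
        = S4.thetaR m n 0 ^ t * Complex.normSq (S4.Wc f 0 i)
          + ∑ u ∈ Finset.univ.erase 0, S4.thetaR m n u ^ t * Complex.normSq (S4.Wc f u i) :=
      (Finset.add_sum_erase _ _ (Finset.mem_univ 0)).symm
    have h0 : S4.thetaR m n 0 ^ t * Complex.normSq (S4.Wc f 0 i)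
        = ((S4.colorF f i).card : ℝ) ^ 2 * L 0 ^ t := by
      rw [S4.thetaR_zero, S4.Wc_zero, hL0]
      rw [show (((S4.colorF f i).card : ℕ) : ℂ)
          = ((((S4.colorF f i).card : ℕ) : ℝ) : ℂ) by push_cast; rfl]
      rw [Complex.normSq_ofReal]
      ring
    have herase : ∑ u ∈ Finset.univ.erase 0,
          S4.thetaR m n u ^ t * Complex.normSq (S4.Wc f u i)
        = ∑ j : Fin l, L j.succ ^ t * (∑ u ∈ Uset j, Complex.normSq (S4.Wc f u i)) := by
      have hpt : ∀ u ∈ Finset.univ.erase (0 : DoobV m n),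
          S4.thetaR m n u ^ t * Complex.normSq (S4.Wc f u i)
            = ∑ j : Fin l, (if S4.thetaR m n u = L j.succ
                then L j.succ ^ t * Complex.normSq (S4.Wc f u i) else 0) := by
        intro u hu
        have hu0 : u ≠ 0 := (Finset.mem_erase.mp hu).1
        by_cases hex : ∃ j : Fin l, S4.thetaR m n u = L j.succ
        · obtain ⟨j0, hj0⟩ := hex
          rw [Finset.sum_eq_single j0]
          · rw [if_pos hj0, ← hj0]
          · intro j1 _ hj1
            rw [if_neg]
            intro hcon
            exact hj1 (Fin.succ_injective _ (hmono.injective (by rw [← hcon, ← hj0])))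
          · intro habs; exact absurd (Finset.mem_univ j0) habs
        · have hzero : Complex.normSq (S4.Wc f u i) = 0 := by
            by_contra hne
            have hWne : S4.Wc f u i ≠ 0 := fun h => hne (by rw [h]; simp)
            obtain ⟨j, hj⟩ := S4.theta_is_eig f S hf L heig u i hWne
            rcases Fin.eq_zero_or_eq_succ j with hj0 | ⟨j', hj'⟩
            · apply hu0
              apply S4.theta_eq_card_imp
              rw [← hj, hj0, hL0]
            · exact hex ⟨j', by rw [← hj, hj']⟩
          rw [hzero]
          simp
      rw [Finset.sum_congr rfl hpt, Finset.sum_comm]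
      apply Finset.sum_congr rfl
      intro j _
      have hsets : (Finset.univ.erase (0 : DoobV m n)).filter
          (fun u => S4.thetaR m n u = L j.succ) = Uset j := by
        rw [hUset]
        ext u
        simp only [Finset.mem_filter, Finset.mem_erase, Finset.mem_univ, true_and, and_true]
      rw [Finset.sum_ite, Finset.sum_const_zero, add_zero, hsets, Finset.mul_sum]
    have hM := masterR t
    rw [hsplit, h0, herase] at hM
    linarith [hM]
  -- existence
  have hex : ∀ t : ℕ, t < l →
      ∑ j : Fin l, (L j.succ) ^ t * aa j
        = ((f ⁻¹' {i}).ncard : ℝ) * (((S ^ t) i i : ℤ) : ℝ)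
          - (((f ⁻¹' {i}).ncard : ℝ) ^ 2 / 4 ^ (2 * m + n)) * (L 0) ^ t := by
    intro t _
    calc ∑ j : Fin l, L j.succ ^ t * aa j
        = (∑ j : Fin l, L j.succ ^ t * (∑ u ∈ Uset j, Complex.normSq (S4.Wc f u i)))
            / (Fintype.card (DoobV m n) : ℝ) := by
          rw [Finset.sum_div]
          apply Finset.sum_congr rfl; intro j _
          rw [haa, mul_div_assoc]
      _ = ((Fintype.card (DoobV m n) : ℝ) * (((S4.colorF f i).card : ℝ)
              * (((S ^ t) i i : ℤ) : ℝ))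
            - ((S4.colorF f i).card : ℝ) ^ 2 * L 0 ^ t)
            / (Fintype.card (DoobV m n) : ℝ) := by rw [key t]
      _ = _ := by
          rw [hncard, ← hNval]
          field_simp
  refine ⟨aa, hex, ?_, ?_⟩
  · -- uniqueness
    intro b hb
    have hvecMul : Matrix.vecMul (fun j => b j - aa j)
        (Matrix.vandermonde (fun j : Fin l => L j.succ)) = 0 := by
      funext t
      rw [Matrix.vecMul, dotProduct]
      have h1 := hb t t.isLt
      have h2 := hex t t.isLt
      have h3 : ∑ j : Fin l, (b j - aa j) * Matrix.vandermonde (fun j : Fin l => L j.succ) j t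
          = ∑ j : Fin l, L j.succ ^ (t : ℕ) * b j - ∑ j : Fin l, L j.succ ^ (t : ℕ) * aa j := by
        rw [← Finset.sum_sub_distrib]
        apply Finset.sum_congr rfl; intro j _
        rw [Matrix.vandermonde_apply]
        ring
      rw [h3, h1, h2]
      simp
    have hdet : (Matrix.vandermonde (fun j : Fin l => L j.succ)).det ≠ 0 := by
      rw [Matrix.det_vandermonde]
      apply Finset.prod_ne_zero_iff.mpr
      intro a _
      apply Finset.prod_ne_zero_iff.mpr
      intro c hc
      have hlt : L c.succ < L a.succ :=
        hmono (Fin.succ_lt_succ_iff.mpr (Finset.mem_Ioi.mp hc))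
      exact sub_ne_zero.mpr (ne_of_lt hlt)
    have hvv : (fun j => b j - aa j) = (0 : Fin l → ℝ) := by
      by_contra hne
      exact hdet (Matrix.exists_vecMul_eq_zero_iff.mp ⟨_, hne, hvecMul⟩)
    funext j
    have := congrFun hvv j
    simpa [sub_eq_zero] using this
  · -- integrality
    intro j
    choose r hr using fun u => S4.normSq_Wc_nat f u i
    refine ⟨∑ u ∈ Uset j, r u, ?_⟩
    rw [haa]
    simp only
    rw [← hNval, mul_comm, div_mul_cancel₀ _ hNne]
    rw [Finset.sum_congr rfl fun u _ => hr u]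
    push_cast
    rfl
end

section
/- For every q ≥ 2 and every odd n ≥ 3, there are no extended 1-perfect codes in the Hamming graph H(n,q). -/
section aux
variable {q : ℕ}

lemma hd_filter {N : ℕ} (x y : Fin N → ZMod q) :
    hammingDist x y = (Finset.univ.filter fun t => x t ≠ y t).card := rfl

lemma hg_exists_walk {N : ℕ} : ∀ (d : ℕ) (x y : Fin N → ZMod q), hammingDist x y = d →
    ∃ p : (hammingGraph N q).Walk x y, p.length = d := by
  intro d
  induction d with
  | zero =>
    intro x y h
    obtain rfl : x = y := hammingDist_eq_zero.mp h
    exact ⟨SimpleGraph.Walk.nil, rfl⟩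
  | succ d ih =>
    intro x y h
    have hne : ({k | x k ≠ y k} : Finset (Fin N)).Nonempty := by
      rw [← Finset.card_pos]
      have : hammingDist x y = ({k | x k ≠ y k} : Finset (Fin N)).card := rfl
      omega
    obtain ⟨k, hk⟩ := hne
    have hk' : x k ≠ y k := by simpa using hk
    set x' := Function.update x k (y k) with hx'
    have hset : ({t | x' t ≠ y t} : Finset (Fin N)) = ({t | x t ≠ y t} : Finset (Fin N)).erase k := by
      ext t
      rcases eq_or_ne t k with rfl | ht
      · simp [hx']
      · simp [hx', Function.update_of_ne ht, ht]
    have hd' : hammingDist x' y = d := by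
      have : hammingDist x' y = (({t | x t ≠ y t} : Finset (Fin N)).erase k).card := by
        rw [← hset]; rfl
      rw [this, Finset.card_erase_of_mem hk]
      have : hammingDist x y = ({t | x t ≠ y t} : Finset (Fin N)).card := rfl
      omega
    have hadj : (hammingGraph N q).Adj x x' := by
      show hammingDist x x' = 1
      have : ({t | x t ≠ x' t} : Finset (Fin N)) = {k} := by
        ext t
        rcases eq_or_ne t k with rfl | ht
        · simp [hx', hk']
        · simp [hx', Function.update_of_ne ht, ht]
      show ({t | x t ≠ x' t} : Finset (Fin N)).card = 1
      rw [this]; simp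
    obtain ⟨p, hp⟩ := ih x' y hd'
    exact ⟨SimpleGraph.Walk.cons hadj p, by simp [hp]⟩

lemma hg_le_walk {N : ℕ} {x y : Fin N → ZMod q} (p : (hammingGraph N q).Walk x y) :
    hammingDist x y ≤ p.length := by
  induction p with
  | nil => simp
  | @cons u v w h p ih =>
    have h1 : hammingDist u v = 1 := h
    have h2 := hammingDist_triangle u v w
    simp only [SimpleGraph.Walk.length_cons]
    omega

lemma hg_dist_eq {N : ℕ} (x y : Fin N → ZMod q) :
    (hammingGraph N q).dist x y = hammingDist x y := by
  obtain ⟨p, hp⟩ := hg_exists_walk (hammingDist x y) x y rfl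
  refine le_antisymm (hp ▸ SimpleGraph.dist_le p) ?_
  rcases eq_or_ne x y with rfl | hne
  · simp
  · have hr : (hammingGraph N q).Reachable x y := ⟨p⟩
    obtain ⟨w, hw⟩ := hr.exists_walk_length_eq_dist
    rw [← hw]
    exact hg_le_walk w

variable {n : ℕ} (i : Fin n)

def ecoord (j : Fin (n-1)) : Fin n :=
  Fin.cast (show n - 1 + 1 = n by have := i.pos; omega)
      ((Fin.cast (show n = n - 1 + 1 by have := i.pos; omega) i).succAbove j)

lemma deleteCoord_apply (c : Fin n → ZMod q) (j : Fin (n-1)) :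
    deleteCoord i c j = c (ecoord i j) := rfl

lemma ecoord_injective : Function.Injective (ecoord i) := by
  intro s t h
  have := Fin.cast_injective (show n - 1 + 1 = n by have := i.pos; omega) h
  exact Fin.succAbove_right_injective this

lemma ecoord_ne (j : Fin (n-1)) : ecoord i j ≠ i := by
  intro h
  have h2 := congrArg (Fin.cast (show n = n - 1 + 1 by have := i.pos; omega)) h
  simp only [ecoord, Fin.cast_cast, Fin.cast_eq_self] at h2
  · exact Fin.succAbove_ne _ j h2

lemma ecoord_image : (Finset.univ.image (ecoord i)) = Finset.univ.erase i := by
  apply Finset.eq_of_subset_of_card_le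
  · intro k hk
    simp only [Finset.mem_image] at hk
    obtain ⟨j, _, rfl⟩ := hk
    exact Finset.mem_erase.mpr ⟨ecoord_ne i j, Finset.mem_univ _⟩
  · rw [Finset.card_erase_of_mem (Finset.mem_univ _),
      Finset.card_image_of_injective _ (ecoord_injective i)]
    simp

lemma hammingDist_split (x y : Fin n → ZMod q) :
    hammingDist x y = hammingDist (deleteCoord i x) (deleteCoord i y)
      + if x i = y i then 0 else 1 := by
  have huniv : (Finset.univ : Finset (Fin n)) = insert i (Finset.univ.image (ecoord i)) := by
    rw [ecoord_image, Finset.insert_erase (Finset.mem_univ _)]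
  have hnotmem : i ∉ Finset.univ.image (ecoord i) := by
    rw [ecoord_image]; simp
  have h1 : hammingDist x y = (Finset.univ.filter (fun t => x t ≠ y t)).card := rfl
  have h2 : hammingDist (deleteCoord i x) (deleteCoord i y)
      = ((Finset.univ : Finset (Fin (n-1))).filter (fun t => x (ecoord i t) ≠ y (ecoord i t))).card := rfl
  rw [h1, h2, huniv, Finset.filter_insert, Finset.filter_image]
  by_cases h : x i = y i
  · rw [if_neg (by simpa using h), if_pos h,
      Finset.card_image_of_injective _ (ecoord_injective i), Nat.add_zero]
  · have : i ∉ Finset.image (ecoord i) (Finset.filter (fun a => x (ecoord i a) ≠ y (ecoord i a)) Finset.univ) :=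
      fun hmem => hnotmem (Finset.image_subset_image (Finset.filter_subset _ _) hmem)
    rw [if_pos h, if_neg h, Finset.card_insert_of_notMem this,
      Finset.card_image_of_injective _ (ecoord_injective i), Nat.add_comm]

end aux


/-- Theorem 3(3) (Statement 18): for every `q ≥ 2` and every odd `n ≥ 3`, there are no
extended `1`-perfect codes in `H(n,q)`. -/
theorem statement18 (n q : ℕ) (hq : 2 ≤ q) (hn : 3 ≤ n) (hodd : Odd n) :
    ¬ ∃ C : Set (Fin n → ZMod q), IsExtOnePerfectH n q C := by
  rintro ⟨C, hne, hdist4, i, hperf⟩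
  haveI : NeZero q := ⟨by omega⟩
  haveI : Fact (1 < q) := ⟨by omega⟩
  -- basic facts
  have hmin : ∀ c ∈ C, ∀ c' ∈ C, c ≠ c' → 4 ≤ hammingDist c c' := by
    intro c hc c' hc' hcc
    have hmem : (hammingGraph n q).dist c c' ∈
        {d : ℕ | ∃ x ∈ C, ∃ y ∈ C, x ≠ y ∧ (hammingGraph n q).dist x y = d} :=
      ⟨c, hc, c', hc', hcc, rfl⟩
    have h2 : codeDist (hammingGraph n q) C ≤ (hammingGraph n q).dist c c' := Nat.sInf_le hmem
    rw [hdist4, hg_dist_eq] at h2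
    exact h2
  have hπinj : ∀ c ∈ C, ∀ c' ∈ C, deleteCoord i c = deleteCoord i c' → c = c' := by
    intro c hc c' hc' h
    by_contra hcc
    have h4 := hmin c hc c' hc' hcc
    have hs := hammingDist_split i c c'
    rw [h, hammingDist_self] at hs
    split at hs <;> omega
  have hcover : ∀ y : Fin (n-1) → ZMod q, ∃ c ∈ C, hammingDist y (deleteCoord i c) ≤ 1 := by
    intro y
    obtain ⟨d, ⟨⟨c, hc, rfl⟩, hd⟩, -⟩ := hperf y
    rw [hg_dist_eq] at hd
    exact ⟨c, hc, hd⟩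
  have huniq : ∀ y : Fin (n-1) → ZMod q, ∀ c ∈ C, ∀ c' ∈ C,
      hammingDist y (deleteCoord i c) ≤ 1 → hammingDist y (deleteCoord i c') ≤ 1 → c = c' := by
    intro y c hc c' hc' h h'
    obtain ⟨d, -, hdu⟩ := hperf y
    have e1 : deleteCoord i c = d := hdu _ ⟨⟨c, hc, rfl⟩, by rw [hg_dist_eq]; exact h⟩
    have e2 : deleteCoord i c' = d := hdu _ ⟨⟨c', hc', rfl⟩, by rw [hg_dist_eq]; exact h'⟩
    exact hπinj c hc c' hc' (e1.trans e2.symm)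
  -- setup
  obtain ⟨c₀, hc₀⟩ := hne
  obtain ⟨d₀, hd₀⟩ : ∃ d₀, d₀ = deleteCoord i c₀ := ⟨_, rfl⟩
  have j : Fin (n-1) := ⟨0, by omega⟩
  obtain ⟨a, ha⟩ := exists_ne (d₀ j)
  obtain ⟨σ, hσ⟩ := exists_ne (c₀ i)
  obtain ⟨Y, hY⟩ : ∃ Y : Fin (n-1) → ZMod q → (Fin (n-1) → ZMod q),
      Y = fun k b t => if t = j then a else if t = k then b else d₀ t := ⟨_, rfl⟩
  have hYj : ∀ k b, Y k b j = a := by intro k b; simp [hY]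
  have hYk : ∀ k b, k ≠ j → Y k b k = b := by intro k b hk; simp [hY, hk]
  have hYt : ∀ k b t, t ≠ j → t ≠ k → Y k b t = d₀ t := by
    intro k b t h1 h2; rw [hY]; simp [h1, h2]
  have hY2 : ∀ k b, k ≠ j → b ≠ d₀ k → hammingDist (Y k b) d₀ = 2 := by
    intro k b hkj hb
    rw [hd_filter]
    have hset : (Finset.univ.filter fun t => Y k b t ≠ d₀ t) = {j, k} := by
      ext t
      simp only [Finset.mem_filter, Finset.mem_univ, true_and, Finset.mem_insert,
        Finset.mem_singleton]
      constructor
      · intro h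
        by_contra hcon
        push_neg at hcon
        exact h (hYt k b t hcon.1 hcon.2)
      · rintro (h | h) <;> rw [h]
        · rw [hYj k b]; exact ha
        · rw [hYk k b hkj]; exact hb
    rw [hset, Finset.card_pair (Ne.symm hkj)]
  -- existence of blocks
  have hQex : ∀ k, k ≠ j → ∀ b, b ≠ d₀ k → ∃ c, c ∈ C ∧ deleteCoord i c j = a ∧
      deleteCoord i c k = b ∧ hammingDist (deleteCoord i c) d₀ = 3 := by
    intro k hkj b hb
    obtain ⟨c, hc, hcov⟩ := hcover (Y k b)
    have hY2' := hY2 k b hkj hb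
    have hne0 : c ≠ c₀ := by
      rintro rfl
      rw [← hd₀] at hcov
      omega
    have h3 : 3 ≤ hammingDist (deleteCoord i c) d₀ := by
      have h4 := hmin c hc c₀ hc₀ hne0
      have hs := hammingDist_split i c c₀
      rw [← hd₀] at hs
      split at hs <;> omega
    have h3' : hammingDist (deleteCoord i c) d₀ ≤ 3 := by
      have htri := hammingDist_triangle (deleteCoord i c) (Y k b) d₀
      rw [hammingDist_comm (deleteCoord i c) (Y k b)] at htri
      omega
    have hdist3 : hammingDist (deleteCoord i c) d₀ = 3 := le_antisymm h3' h3
    have hcard1 : (Finset.univ.filter fun t => Y k b t ≠ deleteCoord i c t).card ≤ 1 := by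
      rw [← hd_filter]; exact hcov
    have hsub : (Finset.univ.filter fun t => deleteCoord i c t ≠ d₀ t) ⊆
        (Finset.univ.filter fun t => Y k b t ≠ deleteCoord i c t) ∪ {j, k} := by
      intro t ht
      simp only [Finset.mem_filter, Finset.mem_univ, true_and] at ht
      by_cases h1 : t = j
      · rw [h1]; exact Finset.mem_union_right _ (by simp)
      by_cases h2 : t = k
      · rw [h2]; exact Finset.mem_union_right _ (by simp)
      · refine Finset.mem_union_left _ ?_
        simp only [Finset.mem_filter, Finset.mem_univ, true_and]
        rw [hYt k b t h1 h2]
        exact Ne.symm ht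
    rw [hd_filter] at hdist3
    have hj' : deleteCoord i c j = a := by
      by_contra hcon
      have hjm : j ∈ Finset.univ.filter fun t => Y k b t ≠ deleteCoord i c t := by
        simp only [Finset.mem_filter, Finset.mem_univ, true_and]
        rw [hYj k b]
        exact fun h => hcon h.symm
      have hs1 : (Finset.univ.filter fun t => Y k b t ≠ deleteCoord i c t) = {j} :=
        Finset.eq_singleton_iff_unique_mem.mpr
          ⟨hjm, fun x hx => Finset.card_le_one.mp hcard1 x hx j hjm⟩
      have hsub2 : (Finset.univ.filter fun t => deleteCoord i c t ≠ d₀ t) ⊆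
          ({j, k} : Finset _) := by
        intro t ht
        have hmem := hsub ht
        rw [hs1] at hmem
        rcases Finset.mem_union.mp hmem with h | h
        · rw [Finset.mem_singleton] at h; rw [h]; simp
        · exact h
      have hle := Finset.card_le_card hsub2
      rw [Finset.card_pair (Ne.symm hkj)] at hle
      omega
    have hk' : deleteCoord i c k = b := by
      by_contra hcon
      have hkm : k ∈ Finset.univ.filter fun t => Y k b t ≠ deleteCoord i c t := by
        simp only [Finset.mem_filter, Finset.mem_univ, true_and]
        rw [hYk k b hkj]
        exact fun h => hcon h.symm
      have hs1 : (Finset.univ.filter fun t => Y k b t ≠ deleteCoord i c t) = {k} :=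
        Finset.eq_singleton_iff_unique_mem.mpr
          ⟨hkm, fun x hx => Finset.card_le_one.mp hcard1 x hx k hkm⟩
      have hsub2 : (Finset.univ.filter fun t => deleteCoord i c t ≠ d₀ t) ⊆
          ({j, k} : Finset _) := by
        intro t ht
        have hmem := hsub ht
        rw [hs1] at hmem
        rcases Finset.mem_union.mp hmem with h | h
        · rw [Finset.mem_singleton] at h; rw [h]; simp
        · exact h
      have hle := Finset.card_le_card hsub2
      rw [Finset.card_pair (Ne.symm hkj)] at hle
      omega
    exact ⟨c, hc, hj', hk', by rw [hd_filter]; exact hdist3⟩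
  -- a block covers its Y word
  have hQcov : ∀ k, k ≠ j → ∀ b, b ≠ d₀ k → ∀ c, c ∈ C → deleteCoord i c j = a →
      deleteCoord i c k = b → hammingDist (deleteCoord i c) d₀ = 3 →
      hammingDist (Y k b) (deleteCoord i c) ≤ 1 := by
    intro k hkj b hb c _ hcj hck hc3
    rw [hd_filter]
    have hsub : (Finset.univ.filter fun t => Y k b t ≠ deleteCoord i c t) ⊆
        (Finset.univ.filter fun t => deleteCoord i c t ≠ d₀ t) \ {j, k} := by
      intro t ht
      simp only [Finset.mem_filter, Finset.mem_univ, true_and] at ht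
      have h1 : t ≠ j := by
        intro h
        exact ht (by rw [h, hYj k b, hcj])
      have h2 : t ≠ k := by
        intro h
        exact ht (by rw [h, hYk k b hkj, hck])
      refine Finset.mem_sdiff.mpr ⟨?_, by simp [h1, h2]⟩
      simp only [Finset.mem_filter, Finset.mem_univ, true_and]
      intro hcon
      exact ht ((hYt k b t h1 h2).trans hcon.symm)
    have hjk : ({j, k} : Finset _) ⊆
        Finset.univ.filter fun t => deleteCoord i c t ≠ d₀ t := by
      intro t htm
      simp only [Finset.mem_insert, Finset.mem_singleton] at htm
      simp only [Finset.mem_filter, Finset.mem_univ, true_and]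
      rcases htm with h | h <;> rw [h]
      · rw [hcj]; exact ha
      · rw [hck]; exact hb
    have hle := Finset.card_le_card hsub
    rw [Finset.card_sdiff_of_subset hjk, Finset.card_pair (Ne.symm hkj)] at hle
    rw [hd_filter] at hc3
    omega
  -- colors differ from the base color
  have hcol0 : ∀ c ∈ C, hammingDist (deleteCoord i c) d₀ = 3 → c i ≠ c₀ i := by
    intro c hc h3
    have hnc : c ≠ c₀ := by
      rintro rfl
      rw [← hd₀, hammingDist_self] at h3
      omega
    have h4 := hmin c hc c₀ hc₀ hnc
    have hs := hammingDist_split i c c₀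
    rw [← hd₀, h3] at hs
    intro heq
    rw [if_pos heq] at hs
    omega
  -- blocks with different b at the same k have different colors
  have hcolor : ∀ k, k ≠ j → ∀ b b', b ≠ b' → ∀ c c', c ∈ C → c' ∈ C →
      deleteCoord i c j = a → deleteCoord i c' j = a →
      deleteCoord i c k = b → deleteCoord i c' k = b' →
      b ≠ d₀ k → b' ≠ d₀ k →
      hammingDist (deleteCoord i c) d₀ = 3 → hammingDist (deleteCoord i c') d₀ = 3 →
      c i ≠ c' i := by
    intro k hkj b b' hbb c c' hc hc' hcj hc'j hck hc'k hb hb' h3 h3'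
    have hnc : c ≠ c' := by
      rintro rfl
      rw [hck] at hc'k
      exact hbb hc'k
    have h4 := hmin c hc c' hc' hnc
    have hs := hammingDist_split i c c'
    have hbound : hammingDist (deleteCoord i c) (deleteCoord i c') ≤ 3 := by
      rw [hd_filter]
      have hsub : (Finset.univ.filter fun t => deleteCoord i c t ≠ deleteCoord i c' t)
          ⊆ ((Finset.univ.filter fun t => deleteCoord i c t ≠ d₀ t) ∪
             (Finset.univ.filter fun t => deleteCoord i c' t ≠ d₀ t)).erase j := by
        intro t ht
        simp only [Finset.mem_filter, Finset.mem_univ, true_and] at ht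
        have h1 : t ≠ j := by rintro rfl; exact ht (hcj.trans hc'j.symm)
        refine Finset.mem_erase.mpr ⟨h1, ?_⟩
        by_cases h2 : deleteCoord i c t = d₀ t
        · refine Finset.mem_union_right _ ?_
          simp only [Finset.mem_filter, Finset.mem_univ, true_and]
          intro hcon
          exact ht (h2.trans hcon.symm)
        · exact Finset.mem_union_left _ (Finset.mem_filter.mpr ⟨Finset.mem_univ t, h2⟩)
      have hjk : ({j, k} : Finset _) ⊆
          (Finset.univ.filter fun t => deleteCoord i c t ≠ d₀ t) ∩
          (Finset.univ.filter fun t => deleteCoord i c' t ≠ d₀ t) := by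
        intro t htm
        simp only [Finset.mem_insert, Finset.mem_singleton] at htm
        simp only [Finset.mem_inter, Finset.mem_filter, Finset.mem_univ, true_and]
        rcases htm with h | h <;> rw [h]
        · exact ⟨by rw [hcj]; exact ha, by rw [hc'j]; exact ha⟩
        · exact ⟨by rw [hck]; exact hb, by rw [hc'k]; exact hb'⟩
      have h5 := Finset.card_le_card hjk
      rw [Finset.card_pair (Ne.symm hkj)] at h5
      have h6 := Finset.card_union_add_card_inter
        (Finset.univ.filter fun t => deleteCoord i c t ≠ d₀ t)
        (Finset.univ.filter fun t => deleteCoord i c' t ≠ d₀ t)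
      rw [hd_filter] at h3 h3'
      have hjm : j ∈ (Finset.univ.filter fun t => deleteCoord i c t ≠ d₀ t) ∪
          (Finset.univ.filter fun t => deleteCoord i c' t ≠ d₀ t) := by
        refine Finset.mem_union_left _ ?_
        simp only [Finset.mem_filter, Finset.mem_univ, true_and]
        rw [hcj]; exact ha
      have hle := Finset.card_le_card hsub
      rw [Finset.card_erase_of_mem hjm] at hle
      omega
    intro heq
    rw [if_pos heq] at hs
    omega
  -- existence of a σ-colored block at every position k
  have hexσ : ∀ k, k ≠ j → ∃ c, c ∈ C ∧ deleteCoord i c j = a ∧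
      deleteCoord i c k ≠ d₀ k ∧ hammingDist (deleteCoord i c) d₀ = 3 ∧ c i = σ := by
    intro k hkj
    have hch : ∀ b : {b : ZMod q // b ≠ d₀ k}, ∃ c, c ∈ C ∧ deleteCoord i c j = a ∧
        deleteCoord i c k = b.1 ∧ hammingDist (deleteCoord i c) d₀ = 3 :=
      fun b => hQex k hkj b.1 b.2
    choose g hg using hch
    obtain ⟨F, hF⟩ : ∃ F : {b : ZMod q // b ≠ d₀ k} → {t : ZMod q // t ≠ c₀ i},
        F = fun b => ⟨g b i, hcol0 (g b) (hg b).1 (hg b).2.2.2⟩ := ⟨_, rfl⟩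
    have hFinj : Function.Injective F := by
      intro b b' hEq
      by_contra hbb
      have hne' : b.1 ≠ b'.1 := fun h => hbb (Subtype.ext h)
      have hcol := hcolor k hkj b.1 b'.1 hne' (g b) (g b') (hg b).1 (hg b').1
        (hg b).2.1 (hg b').2.1 (hg b).2.2.1 (hg b').2.2.1 b.2 b'.2 (hg b).2.2.2 (hg b').2.2.2
      rw [hF] at hEq
      exact hcol (congrArg Subtype.val hEq)
    have hcards : Fintype.card {b : ZMod q // b ≠ d₀ k} =
        Fintype.card {t : ZMod q // t ≠ c₀ i} := by
      simp only [ne_eq]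
      rw [Fintype.card_subtype_compl, Fintype.card_subtype_compl,
        Fintype.card_subtype_eq, Fintype.card_subtype_eq]
    have hFsurj : Function.Surjective F :=
      ((Fintype.bijective_iff_injective_and_card F).mpr ⟨hFinj, hcards⟩).2
    obtain ⟨b, hbEq⟩ := hFsurj ⟨σ, hσ⟩
    refine ⟨g b, (hg b).1, (hg b).2.1, ?_, (hg b).2.2.2, ?_⟩
    · rw [(hg b).2.2.1]; exact b.2
    · rw [hF] at hbEq
      exact congrArg Subtype.val hbEq
  -- uniqueness of the σ-colored block at position k
  have hσuniq : ∀ k, k ≠ j → ∀ c c',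
      (c ∈ C ∧ deleteCoord i c j = a ∧ deleteCoord i c k ≠ d₀ k ∧
        hammingDist (deleteCoord i c) d₀ = 3) →
      (c' ∈ C ∧ deleteCoord i c' j = a ∧ deleteCoord i c' k ≠ d₀ k ∧
        hammingDist (deleteCoord i c') d₀ = 3) →
      c i = σ → c' i = σ → c = c' := by
    rintro k hkj c c' ⟨hc, hcj, hck, h3⟩ ⟨hc', hc'j, hc'k, h3'⟩ hci hc'i
    by_cases hbb : deleteCoord i c k = deleteCoord i c' k
    · exact huniq (Y k (deleteCoord i c k)) c hc c' hc'
        (hQcov k hkj _ hck c hc hcj rfl h3)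
        (hQcov k hkj _ hck c' hc' hc'j hbb.symm h3')
    · exact absurd (hci.trans hc'i.symm)
        (hcolor k hkj _ _ hbb c c' hc hc' hcj hc'j rfl rfl hck hc'k h3 h3')
  -- choose the σ-colored blocks
  have hblock : ∀ k : {k : Fin (n-1) // k ≠ j}, ∃ c, c ∈ C ∧ deleteCoord i c j = a ∧
      deleteCoord i c k.1 ≠ d₀ k.1 ∧ hammingDist (deleteCoord i c) d₀ = 3 ∧ c i = σ :=
    fun k => hexσ k.1 k.2
  choose w hw using hblock
  -- third coordinate of each block
  have hthird : ∀ k : {k : Fin (n-1) // k ≠ j}, ∃ l : Fin (n-1),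
      (Finset.univ.filter fun t => deleteCoord i (w k) t ≠ d₀ t) \ {j, k.1} = {l} := by
    intro k
    apply Finset.card_eq_one.mp
    have hjk : ({j, k.1} : Finset _) ⊆
        Finset.univ.filter fun t => deleteCoord i (w k) t ≠ d₀ t := by
      intro t htm
      simp only [Finset.mem_insert, Finset.mem_singleton] at htm
      simp only [Finset.mem_filter, Finset.mem_univ, true_and]
      rcases htm with h | h <;> rw [h]
      · rw [(hw k).2.1]; exact ha
      · exact (hw k).2.2.1
    rw [Finset.card_sdiff_of_subset hjk, Finset.card_pair (Ne.symm k.2)]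
    have h3 := (hw k).2.2.2.1
    rw [hd_filter] at h3
    omega
  choose l hl using hthird
  have hlmem : ∀ k, l k ∈
      (Finset.univ.filter fun t => deleteCoord i (w k) t ≠ d₀ t) \ {j, k.1} := by
    intro k; rw [hl k]; exact Finset.mem_singleton_self _
  have hlj : ∀ k, l k ≠ j := by
    intro k
    have hmem := (Finset.mem_sdiff.mp (hlmem k)).2
    simp only [Finset.mem_insert, Finset.mem_singleton] at hmem
    push_neg at hmem
    exact hmem.1
  have hlk : ∀ k, l k ≠ k.1 := by
    intro k
    have hmem := (Finset.mem_sdiff.mp (hlmem k)).2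
    simp only [Finset.mem_insert, Finset.mem_singleton] at hmem
    push_neg at hmem
    exact hmem.2
  have hlval : ∀ k, deleteCoord i (w k) (l k) ≠ d₀ (l k) := by
    intro k
    have hmem := (Finset.mem_sdiff.mp (hlmem k)).1
    simpa using hmem
  obtain ⟨φ, hφ⟩ : ∃ φ : {k : Fin (n-1) // k ≠ j} → {k : Fin (n-1) // k ≠ j},
      φ = fun k => ⟨l k, hlj k⟩ := ⟨_, rfl⟩
  have hφval : ∀ k, (φ k).1 = l k := by intro k; rw [hφ]
  have hwφ : ∀ k, w (φ k) = w k := by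
    intro k
    have h1 := hw (φ k)
    rw [hφval k] at h1
    exact hσuniq (l k) (hlj k) (w (φ k)) (w k)
      ⟨h1.1, h1.2.1, h1.2.2.1, h1.2.2.2.1⟩
      ⟨(hw k).1, (hw k).2.1, hlval k, (hw k).2.2.2.1⟩
      h1.2.2.2.2 (hw k).2.2.2.2
  have hsupp : ∀ k, (Finset.univ.filter fun t => deleteCoord i (w k) t ≠ d₀ t)
      = {j, k.1, l k} := by
    intro k
    symm
    apply Finset.eq_of_subset_of_card_le
    · intro t htm
      simp only [Finset.mem_insert, Finset.mem_singleton] at htm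
      simp only [Finset.mem_filter, Finset.mem_univ, true_and]
      rcases htm with h | h | h <;> rw [h]
      · rw [(hw k).2.1]; exact ha
      · exact (hw k).2.2.1
      · exact hlval k
    · have h3 := (hw k).2.2.2.1
      rw [hd_filter] at h3
      have hcard3 : ({j, k.1, l k} : Finset _).card = 3 := by
        rw [Finset.card_insert_of_notMem, Finset.card_pair (fun h => hlk k h.symm)]
        simp only [Finset.mem_insert, Finset.mem_singleton]
        push_neg
        exact ⟨Ne.symm k.2, Ne.symm (hlj k)⟩
      omega
  have hφφ : ∀ k, φ (φ k) = k := by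
    intro k
    have h1 := hl (φ k)
    rw [hwφ k, hsupp k, hφval k] at h1
    have h2 : ({j, k.1, l k} : Finset _) \ {j, l k} = {k.1} := by
      ext t
      simp only [Finset.mem_sdiff, Finset.mem_insert, Finset.mem_singleton]
      constructor
      · rintro ⟨h3 | h3 | h3, h4⟩
        · exact absurd (Or.inl h3) h4
        · exact h3
        · exact absurd (Or.inr h3) h4
      · rintro rfl
        refine ⟨Or.inr (Or.inl rfl), ?_⟩
        push_neg
        exact ⟨k.2, fun h => hlk k h.symm⟩
    rw [h2] at h1
    have h5 : k.1 = l (φ k) := by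
      have := Finset.mem_singleton.mp (h1 ▸ Finset.mem_singleton_self k.1)
      exact this
    apply Subtype.ext
    rw [hφval (φ k), ← h5]
  have hφne : ∀ k, φ k ≠ k := by
    intro k h
    exact hlk k (by rw [← hφval k, h])
  -- parity contradiction
  obtain ⟨f, hfdef⟩ : ∃ f : Function.End {k : Fin (n-1) // k ≠ j}, f = φ := ⟨φ, rfl⟩
  have hf2 : f ^ 2 ^ 1 = 1 := by
    rw [pow_one, pow_two]
    funext k
    show f (f k) = k
    rw [hfdef]
    exact hφφ k
  have hmod := Equiv.Perm.card_fixedPoints_modEq (p := 2) (n := 1) hf2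
  haveI : IsEmpty (Function.fixedPoints f) := by
    refine ⟨fun x => ?_⟩
    obtain ⟨y, hy⟩ := x
    exact hφne y (by rw [← hfdef]; exact hy)
  simp only [Fintype.card_eq_zero] at hmod
  have hdvd := (Nat.modEq_zero_iff_dvd).mp hmod
  have hcard : Fintype.card {k : Fin (n-1) // k ≠ j} = n - 1 - 1 := by
    simp only [ne_eq]
    rw [Fintype.card_subtype_compl, Fintype.card_subtype_eq, Fintype.card_fin]
  rw [hcard] at hdvd
  rw [Nat.odd_iff] at hodd
  omega
end
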